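/- arXiv:1004.3832 — 9 statements merged into one kernel-verified Lean document; each statement's English description precedes it below -/
import Mathlib

section
/- Let X be a complex vector space and A, A' linear operators on X. Suppose that for every vector x and functional f with f(x)=1, we have f(Ax)=0 if and only if f(A'x)=0. Then A' = λA for some scalar λ. -/
open Submodule Set

private lemma dual_exists {X : Type*} [AddCommGroup X] [Module ℂ X] {n : ℕ}
    (v : Fin n → X) (hv : LinearIndependent ℂ v) (c : Fin n → ℂ) :
    ∃ f : X →ₗ[ℂ] ℂ, ∀ i, f (v i) = c i := by
  obtain ⟨q, hq⟩ := (span ℂ (Set.range v)).exists_isCompl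
  let b := Module.Basis.span hv
  let g : span ℂ (Set.range v) →ₗ[ℂ] ℂ := b.constr ℂ c
  refine ⟨g.comp ((span ℂ (Set.range v)).projectionOnto q hq), fun i => ?_⟩
  have hmem : v i ∈ span ℂ (Set.range v) := subset_span (Set.mem_range_self i)
  have : ((span ℂ (Set.range v)).projectionOnto q hq) (v i) = ⟨v i, hmem⟩ := by
    have := Submodule.projectionOnto_apply_left hq ⟨v i, hmem⟩
    simpa using this
  simp only [LinearMap.comp_apply, this]
  have hb : b i = ⟨v i, hmem⟩ := Module.Basis.span_apply hv i
  rw [← hb, Module.Basis.constr_basis]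

private lemma sep1 {X : Type*} [AddCommGroup X] [Module ℂ X] {x : X} (hx : x ≠ 0) :
    ∃ f : X →ₗ[ℂ] ℂ, f x = 1 := by
  obtain ⟨f, hf⟩ := dual_exists ![x] (linearIndependent_unique_iff.2 (by simpa using hx)) ![1]
  exact ⟨f, by simpa using hf 0⟩

private lemma sep2 {X : Type*} [AddCommGroup X] [Module ℂ X] {x y : X} (hx : x ≠ 0)
    (hy : y ∉ span ℂ ({x} : Set X)) (a : ℂ) :
    ∃ f : X →ₗ[ℂ] ℂ, f x = 1 ∧ f y = a := by
  have hli : LinearIndependent ℂ ![x, y] := by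
    rw [LinearIndependent.pair_iff' hx]
    intro c hc
    exact hy (mem_span_singleton.2 ⟨c, hc⟩)
  obtain ⟨f, hf⟩ := dual_exists ![x, y] hli ![1, a]
  exact ⟨f, by simpa using hf 0, by simpa using hf 1⟩

private lemma sep3 {X : Type*} [AddCommGroup X] [Module ℂ X] {x y z : X}
    (hxy : LinearIndependent ℂ ![x, y]) (hz : z ∉ span ℂ ({x, y} : Set X)) (a b c : ℂ) :
    ∃ f : X →ₗ[ℂ] ℂ, f x = a ∧ f y = b ∧ f z = c := by
  have hz' : z ∉ span ℂ (Set.range ![x, y]) := by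
    rwa [show Set.range ![x, y] = ({x, y} : Set X) by
      simp [Matrix.range_cons, Set.pair_comm]]
  have hli : LinearIndependent ℂ ![z, x, y] := by
    rw [show (![z, x, y] : Fin 3 → X) = Fin.cons z ![x, y] from rfl,
      linearIndependent_fin_cons]
    exact ⟨hxy, hz'⟩
  obtain ⟨f, hf⟩ := dual_exists ![z, x, y] hli ![c, a, b]
  exact ⟨f, by simpa using hf 1, by simpa using hf 2, by simpa using hf 0⟩

theorem stmt_0 (X : Type*) [AddCommGroup X] [Module ℂ X]
    (A A' : X →ₗ[ℂ] X)
    (h : ∀ (x : X) (f : X →ₗ[ℂ] ℂ), f x = 1 → (f (A x) = 0 ↔ f (A' x) = 0)) :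
    ∃ lam : ℂ, A' = lam • A := by
  -- Step A : kernel of A contained in kernel of A'
  have hA0 : ∀ x, A x = 0 → A' x = 0 := by
    intro x hx
    by_contra hne
    have hx0 : x ≠ 0 := by rintro rfl; exact hne (by simp)
    by_cases hmem : A' x ∈ span ℂ ({x} : Set X)
    · obtain ⟨c, hc⟩ := mem_span_singleton.1 hmem
      obtain ⟨f, hf⟩ := sep1 hx0
      have h0 : f (A' x) = 0 := (h x f hf).1 (by rw [hx]; simp)
      rw [← hc, map_smul, hf, smul_eq_mul, mul_one] at h0
      exact hne (by rw [← hc, h0, zero_smul])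
    · obtain ⟨f, hf1, hf2⟩ := sep2 hx0 hmem 1
      have h0 : f (A' x) = 0 := (h x f hf1).1 (by rw [hx]; simp)
      rw [hf2] at h0
      exact one_ne_zero h0
  -- Step B : pointwise proportionality
  have hB : ∀ x, ∃ c : ℂ, A' x = c • A x := by
    intro x
    by_cases hAx : A x = 0
    · exact ⟨0, by rw [hA0 x hAx, hAx, smul_zero]⟩
    have hx0 : x ≠ 0 := by rintro rfl; exact hAx (by simp)
    by_cases hli : LinearIndependent ℂ ![x, A x]
    · by_cases hmem : A' x ∈ span ℂ ({x, A x} : Set X)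
      · obtain ⟨α, β, hab⟩ := mem_span_pair.1 hmem
        obtain ⟨f, hf⟩ := dual_exists ![x, A x] hli ![1, 0]
        have hfx : f x = 1 := by simpa using hf 0
        have hfAx : f (A x) = 0 := by simpa using hf 1
        have h0 : f (A' x) = 0 := (h x f hfx).1 hfAx
        rw [← hab, map_add, map_smul, map_smul, hfx, hfAx, smul_eq_mul, mul_one,
          smul_zero, add_zero] at h0
        exact ⟨β, by rw [← hab, h0, zero_smul, zero_add]⟩
      · obtain ⟨f, hfx, hfAx, hfA'⟩ := sep3 hli hmem 1 0 1
        have h0 : f (A' x) = 0 := (h x f hfx).1 hfAx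
        rw [hfA'] at h0
        exact absurd h0 one_ne_zero
    · rw [LinearIndependent.pair_iff' hx0] at hli
      push_neg at hli
      obtain ⟨γ, hγ⟩ := hli
      have hγ0 : γ ≠ 0 := by rintro rfl; rw [zero_smul] at hγ; exact hAx hγ.symm
      by_cases hmem : A' x ∈ span ℂ ({x} : Set X)
      · obtain ⟨δ, hδ⟩ := mem_span_singleton.1 hmem
        refine ⟨δ / γ, ?_⟩
        rw [← hδ, ← hγ, smul_smul, div_mul_cancel₀ _ hγ0]
      · obtain ⟨f, hfx, hfA'⟩ := sep2 hx0 hmem 0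
        have h0 : f (A x) = 0 := (h x f hfx).2 hfA'
        rw [← hγ, map_smul, hfx, smul_eq_mul, mul_one] at h0
        exact absurd h0 hγ0
  -- Step C : globalize
  by_cases hA : ∀ y, A y = 0
  · refine ⟨0, ?_⟩
    ext y
    rw [hA0 y (hA y), LinearMap.smul_apply, zero_smul]
  push_neg at hA
  obtain ⟨x₀, hx₀⟩ := hA
  obtain ⟨lam, hlam⟩ := hB x₀
  refine ⟨lam, ?_⟩
  ext y
  rw [LinearMap.smul_apply]
  by_cases hAy : A y = 0
  · rw [hA0 y hAy, hAy, smul_zero]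
  by_cases hdep : A y ∈ span ℂ ({A x₀} : Set X)
  · obtain ⟨γ, hγ⟩ := mem_span_singleton.1 hdep
    have hker : A (y - γ • x₀) = 0 := by
      rw [map_sub, map_smul, hγ, sub_self]
    have hker' := hA0 _ hker
    rw [map_sub, map_smul, sub_eq_zero] at hker'
    rw [hker', hlam, smul_smul, mul_comm, ← smul_smul, hγ]
  · have hli : LinearIndependent ℂ ![A x₀, A y] := by
      rw [LinearIndependent.pair_iff' hx₀]
      intro c hc
      exact hdep (mem_span_singleton.2 ⟨c, hc⟩)
    obtain ⟨cy, hcy⟩ := hB y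
    obtain ⟨cs, hcs⟩ := hB (x₀ + y)
    rw [map_add, map_add, hlam, hcy, smul_add] at hcs
    have hzero : (lam - cs) • A x₀ + (cy - cs) • A y = 0 := by
      rw [sub_smul, sub_smul]
      abel_nf
      linear_combination (norm := module) hcs
    obtain ⟨h1, h2⟩ := (LinearIndependent.pair_iff.1 hli) _ _ hzero
    rw [hcy, (sub_eq_zero.1 h2).trans (sub_eq_zero.1 h1).symm]
end

section
/- Let X = ℂ^n with n ≥ 2, and A an n×n complex matrix. If for every rank-one idempotent B = x⊗f (with f(x)=1), spectrum(AB + BA) = {0}, then A = 0. -/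
open Matrix Polynomial in
lemma my_eval_charpoly {n : ℕ} (M : Matrix (Fin n) (Fin n) ℂ) (μ : ℂ) :
    M.charpoly.eval μ = (Matrix.scalar (Fin n) μ - M).det := by
  rw [Matrix.charpoly, _root_.eval_det, matPolyEquiv_charmatrix]
  simp

open Matrix in
lemma my_trace_eq_zero {n : ℕ} (M : Matrix (Fin n) (Fin n) ℂ)
    (h : spectrum ℂ M = {0}) : M.trace = 0 := by
  rw [Matrix.trace_eq_sum_roots_charpoly]
  apply Multiset.sum_eq_zero
  intro μ hμ
  have hroot : M.charpoly.eval μ = 0 := by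
    have := Polynomial.isRoot_of_mem_roots hμ
    exact this
  have hmem : μ ∈ spectrum ℂ M := by
    rw [spectrum.mem_iff]
    intro hu
    rw [Matrix.isUnit_iff_isUnit_det] at hu
    have hd : (algebraMap ℂ (Matrix (Fin n) (Fin n) ℂ) μ - M).det
        = (Matrix.scalar (Fin n) μ - M).det := by
      simp [Matrix.scalar_apply, Matrix.algebraMap_eq_diagonal, Pi.algebraMap_def]
    rw [hd, ← my_eval_charpoly, hroot] at hu
    exact hu.ne_zero rfl
  rw [h] at hmem
  exact hmem

open Matrix in
theorem stmt_2 (n : ℕ) (hn : 2 ≤ n) (A : Matrix (Fin n) (Fin n) ℂ)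
    (h : ∀ (x f : Fin n → ℂ), f ⬝ᵥ x = 1 →
      spectrum ℂ (A * Matrix.vecMulVec x f + Matrix.vecMulVec x f * A) = {0}) :
    A = 0 := by
  have key : ∀ (x f : Fin n → ℂ), f ⬝ᵥ x = 1 → f ⬝ᵥ (A *ᵥ x) = 0 := by
    intro x f hfx
    have ht := my_trace_eq_zero _ (h x f hfx)
    rw [Matrix.trace_add] at ht
    have h1 : (A * Matrix.vecMulVec x f).trace = f ⬝ᵥ (A *ᵥ x) := by
      simp only [Matrix.trace, Matrix.diag, Matrix.mul_apply, Matrix.vecMulVec_apply,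
        dotProduct, Matrix.mulVec, Finset.mul_sum]
      apply Finset.sum_congr rfl; intro i _
      apply Finset.sum_congr rfl; intro j _
      ring
    have h2 : (Matrix.vecMulVec x f * A).trace = f ⬝ᵥ (A *ᵥ x) := by
      simp only [Matrix.trace, Matrix.diag, Matrix.mul_apply, Matrix.vecMulVec_apply,
        dotProduct, Matrix.mulVec, Finset.mul_sum]
      conv_lhs => rw [Finset.sum_comm]
      apply Finset.sum_congr rfl; intro i _
      apply Finset.sum_congr rfl; intro j _
      ring
    rw [h1, h2] at ht
    have : (2 : ℂ) * (f ⬝ᵥ (A *ᵥ x)) = 0 := by rw [two_mul]; exact ht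
    simpa using this
  have diag : ∀ i, A i i = 0 := by
    intro i
    have := key (Pi.single i 1) (Pi.single i 1) (by simp)
    simpa [dotProduct, Matrix.mulVec, Pi.single_apply] using this
  ext i j
  rcases eq_or_ne i j with rfl | hij
  · simpa using diag i
  · have := key (Pi.single j 1) (Pi.single i 1 + Pi.single j 1)
      (by simp [dotProduct, Pi.single_apply, hij.symm])
    simp [dotProduct, Matrix.mulVec, Pi.single_apply, Finset.sum_add_distrib,
      add_mul, diag j] at this
    simpa [diag j] using this
end

section
/- Let A be an n×n complex matrix and P = x⊗f a rank-one idempotent (f(x)=1). Then AP + PA has two distinct nonzero eigenvalues if and only if f(A²x) ≠ 0 and f(A²x) ≠ (f(Ax))². -/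
open Matrix in
lemma mem_spectrum_iff_aux {n : ℕ} (M : Matrix (Fin n) (Fin n) ℂ) (μ : ℂ) :
    μ ∈ spectrum ℂ M ↔ ∃ v : Fin n → ℂ, v ≠ 0 ∧ M.mulVec v = μ • v := by
  rw [spectrum.mem_iff, Matrix.isUnit_iff_isUnit_det, isUnit_iff_ne_zero, not_not,
    ← Matrix.exists_mulVec_eq_zero_iff]
  have halg : ∀ v : Fin n → ℂ,
      (algebraMap ℂ (Matrix (Fin n) (Fin n) ℂ) μ).mulVec v = μ • v := by
    intro v
    rw [Algebra.algebraMap_eq_smul_one, Matrix.smul_mulVec, Matrix.one_mulVec]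
  constructor
  · rintro ⟨v, hv, h⟩
    refine ⟨v, hv, ?_⟩
    rw [Matrix.sub_mulVec, halg, sub_eq_zero] at h
    exact h.symm
  · rintro ⟨v, hv, h⟩
    exact ⟨v, hv, by rw [Matrix.sub_mulVec, halg, h, sub_self]⟩

open Matrix in
theorem stmt_4 (n : ℕ) (A : Matrix (Fin n) (Fin n) ℂ) (x f : Fin n → ℂ)
    (hxf : f ⬝ᵥ x = 1) :
    (∃ μ ν : ℂ, μ ≠ ν ∧ μ ≠ 0 ∧ ν ≠ 0 ∧
        μ ∈ spectrum ℂ (A * Matrix.vecMulVec x f + Matrix.vecMulVec x f * A) ∧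
        ν ∈ spectrum ℂ (A * Matrix.vecMulVec x f + Matrix.vecMulVec x f * A))
      ↔ f ⬝ᵥ (A ^ 2).mulVec x ≠ 0 ∧ f ⬝ᵥ (A ^ 2).mulVec x ≠ (f ⬝ᵥ A.mulVec x) ^ 2 := by
  set a : ℂ := f ⬝ᵥ A.mulVec x with ha
  set b : ℂ := f ⬝ᵥ (A ^ 2).mulVec x with hb
  set M : Matrix (Fin n) (Fin n) ℂ :=
    A * Matrix.vecMulVec x f + Matrix.vecMulVec x f * A with hM
  have hP : ∀ v : Fin n → ℂ, (Matrix.vecMulVec x f).mulVec v = (f ⬝ᵥ v) • x := by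
    intro v
    ext i
    simp only [Matrix.mulVec, Matrix.vecMulVec_apply, dotProduct, Pi.smul_apply,
      smul_eq_mul, Finset.sum_mul]
    exact Finset.sum_congr rfl fun j _ => by ring
  have hMv : ∀ v : Fin n → ℂ,
      M.mulVec v = (f ⬝ᵥ v) • A.mulVec x + (f ⬝ᵥ A.mulVec v) • x := by
    intro v
    rw [hM, Matrix.add_mulVec, ← Matrix.mulVec_mulVec, ← Matrix.mulVec_mulVec, hP,
      Matrix.mulVec_smul, hP]
  have hb' : f ⬝ᵥ A.mulVec (A.mulVec x) = b := by
    rw [hb, pow_two, Matrix.mulVec_mulVec]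
  constructor
  · rintro ⟨μ, ν, hμν, hμ0, hν0, hμ, hν⟩
    have key : ∀ t : ℂ, t ≠ 0 → t ∈ spectrum ℂ M → (t - a) ^ 2 = b := by
      intro t ht0 ht
      obtain ⟨v, hv, hMvt⟩ := (mem_spectrum_iff_aux M t).mp ht
      set p : ℂ := f ⬝ᵥ v with hp
      set q : ℂ := f ⬝ᵥ A.mulVec v with hq
      have hMv' : (f ⬝ᵥ v) • A.mulVec x + (f ⬝ᵥ A.mulVec v) • x = t • v := by
        rw [← hMv, hMvt]
      have e1 : p * a + q * 1 = t * p := by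
        have h := congrArg (fun w => f ⬝ᵥ w) hMv'
        simp only [dotProduct_add, dotProduct_smul, smul_eq_mul, hxf,
          ← ha, ← hp, ← hq] at h
        simpa using h
      have e2 : p * b + q * a = t * q := by
        have h := congrArg (fun w => f ⬝ᵥ A.mulVec w) hMv'
        simp only [Matrix.mulVec_add, Matrix.mulVec_smul, dotProduct_add,
          dotProduct_smul, smul_eq_mul, hb', ← ha, ← hq] at h
        exact h
      by_cases hpq : p = 0 ∧ q = 0
      · exfalso
        rw [← hp, ← hq, hpq.1, hpq.2] at hMv'
        simp only [zero_smul, add_zero, zero_add] at hMv'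
        exact hv (by simpa [smul_eq_zero, ht0] using hMv'.symm)
      · have hq' : q = (t - a) * p := by linear_combination e1
        have hfac : p * ((t - a) ^ 2 - b) = 0 := by
          rw [hq'] at e2
          linear_combination -e2
        rcases mul_eq_zero.mp hfac with hp0 | h
        · exact absurd ⟨hp0, by rw [hq', hp0, mul_zero]⟩ hpq
        · linear_combination h
    have kμ := key μ hμ0 hμ
    have kν := key ν hν0 hν
    constructor
    · intro hb0
      rw [hb0] at kμ kν
      have h1 : μ = a := by
        have := pow_eq_zero_iff (n := 2) (by norm_num) |>.mp kμ
        linear_combination this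
      have h2 : ν = a := by
        have := pow_eq_zero_iff (n := 2) (by norm_num) |>.mp kν
        linear_combination this
      exact hμν (h1.trans h2.symm)
    · intro hba
      rw [hba] at kμ kν
      have h1 : μ * (μ - 2 * a) = 0 := by linear_combination kμ
      have h2 : ν * (ν - 2 * a) = 0 := by linear_combination kν
      have hμ2 : μ = 2 * a := by
        rcases mul_eq_zero.mp h1 with h | h
        · exact absurd h hμ0
        · linear_combination h
      have hν2 : ν = 2 * a := by
        rcases mul_eq_zero.mp h2 with h | h
        · exact absurd h hν0
        · linear_combination h
      exact hμν (hμ2.trans hν2.symm)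
  · rintro ⟨hb0, hba⟩
    obtain ⟨c, hc⟩ : ∃ c : ℂ, c ^ 2 = b := IsAlgClosed.exists_pow_nat_eq b zero_lt_two
    have hc0 : c ≠ 0 := fun h => hb0 (by rw [← hc, h]; ring)
    have hprod : (a + c) * (a - c) = a ^ 2 - b := by rw [← hc]; ring
    have hne : a ^ 2 - b ≠ 0 := sub_ne_zero.mpr fun h => hba h.symm
    have hpc : a + c ≠ 0 := fun h => hne (by rw [← hprod, h, zero_mul])
    have hmc : a - c ≠ 0 := fun h => hne (by rw [← hprod, h, mul_zero])
    have eig : ∀ s : ℂ, s ^ 2 = b → a + s ≠ 0 → (a + s) ∈ spectrum ℂ M := by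
      intro s hs hsne
      rw [mem_spectrum_iff_aux]
      refine ⟨A.mulVec x + s • x, ?_, ?_⟩
      · intro h0
        have h1 : f ⬝ᵥ (A.mulVec x + s • x) = 0 := by rw [h0]; simp
        rw [dotProduct_add, dotProduct_smul, hxf, ← ha] at h1
        exact hsne (by simpa using h1)
      · rw [hMv]
        have e1 : f ⬝ᵥ (A.mulVec x + s • x) = a + s := by
          rw [dotProduct_add, dotProduct_smul, hxf, ← ha]; simp
        have e2 : f ⬝ᵥ A.mulVec (A.mulVec x + s • x) = (a + s) * s := by
          rw [Matrix.mulVec_add, Matrix.mulVec_smul, dotProduct_add,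
            dotProduct_smul, hb', ← ha]
          simp only [smul_eq_mul]
          linear_combination -hs
        rw [e1, e2, smul_add, smul_smul]
    refine ⟨a + c, a - c, ?_, hpc, hmc, eig c hc hpc, ?_⟩
    · intro h
      exact hc0 (by linear_combination h / 2)
    · have := eig (-c) (by rw [← hc]; ring) (by rw [← sub_eq_add_neg]; exact hmc)
      rwa [← sub_eq_add_neg] at this
end

section
/- Let A be an n×n complex matrix of rank two with A² = 0 (n ≥ 4) and s a positive integer. Then for every n×n complex matrix B, the matrix AB^s + B^s A has at most two distinct nonzero eigenvalues. -/
open Matrix Module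

/-- Every spectrum element of a complex matrix has a nonzero eigenvector. -/
lemma aux_eigvec {n : ℕ} (N : Matrix (Fin n) (Fin n) ℂ) {μ : ℂ}
    (h : μ ∈ spectrum ℂ N) : ∃ v, v ≠ 0 ∧ N.mulVec v = μ • v := by
  rw [← AlgEquiv.spectrum_eq (Matrix.toLinAlgEquiv' (R := ℂ) (n := Fin n)),
    ← Module.End.hasEigenvalue_iff_mem_spectrum] at h
  obtain ⟨v, hv⟩ := h.exists_hasEigenvector
  refine ⟨v, hv.right, ?_⟩
  have := hv.apply_eq_smul
  rwa [Matrix.toLinAlgEquiv'_apply] at this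

/-- A matrix of rank ≤ 2 has at most two distinct nonzero eigenvalues: no three
distinct nonzero eigenvalues exist. -/
lemma aux_no3 {n : ℕ} (N : Matrix (Fin n) (Fin n) ℂ) (hrank : N.rank ≤ 2)
    (a b c : ℂ) (ha0 : a ≠ 0) (hb0 : b ≠ 0) (hc0 : c ≠ 0)
    (hab : a ≠ b) (hac : a ≠ c) (hbc : b ≠ c)
    (va vb vc : Fin n → ℂ) (hva0 : va ≠ 0) (hvb0 : vb ≠ 0) (hvc0 : vc ≠ 0)
    (hva : N.mulVec va = a • va) (hvb : N.mulVec vb = b • vb)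
    (hvc : N.mulVec vc = c • vc) : False := by
  set f : Module.End ℂ (Fin n → ℂ) := N.mulVecLin with hf
  have hmem : ∀ (μ : ℂ) (v : Fin n → ℂ), μ ≠ 0 → N.mulVec v = μ • v →
      v ∈ LinearMap.range f := by
    intro μ v hμ hvv
    refine ⟨μ⁻¹ • v, ?_⟩
    simp [hf, Matrix.mulVecLin_apply, Matrix.mulVec_smul, hvv, smul_smul,
      inv_mul_cancel₀ hμ]
  set μs : Fin 3 → ℂ := ![a, b, c] with hμs
  set vs : Fin 3 → (Fin n → ℂ) := ![va, vb, vc] with hvs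
  have hinj : Function.Injective μs := by
    intro i j hij
    rw [hμs] at hij
    fin_cases i <;> fin_cases j <;>
      simp only [Matrix.cons_val_zero, Matrix.cons_val_one, Matrix.head_cons,
        Fin.mk_zero, Fin.mk_one, Matrix.cons_val_two, Matrix.tail_cons] at hij <;>
      first
        | rfl
        | exact absurd hij hab
        | exact absurd hij hac
        | exact absurd hij hbc
        | exact absurd hij.symm hab
        | exact absurd hij.symm hac
        | exact absurd hij.symm hbc
  have heig : ∀ i, f.HasEigenvector (μs i) (vs i) := by
    intro i
    rw [Module.End.hasEigenvector_iff, Module.End.mem_eigenspace_iff]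
    fin_cases i <;>
      simp [hμs, hvs, hf, Matrix.mulVecLin_apply, hva, hvb, hvc, hva0, hvb0, hvc0]
  have hli : LinearIndependent ℂ vs := f.eigenvectors_linearIndependent' μs hinj vs heig
  have hmem' : ∀ i, vs i ∈ LinearMap.range f := by
    intro i
    fin_cases i
    · exact hmem a va ha0 hva
    · exact hmem b vb hb0 hvb
    · exact hmem c vc hc0 hvc
  set ws : Fin 3 → (LinearMap.range f) := fun i => ⟨vs i, hmem' i⟩ with hws
  have hliw : LinearIndependent ℂ ws := by
    apply LinearIndependent.of_comp (LinearMap.range f).subtype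
    convert hli
    rfl
  have hcard := hliw.fintype_card_le_finrank
  rw [Fintype.card_fin] at hcard
  have : Module.finrank ℂ (LinearMap.range f) = N.rank := rfl
  omega

theorem stmt_6 (n : ℕ) (hn : 4 ≤ n) (A : Matrix (Fin n) (Fin n) ℂ)
    (hA : A.rank = 2) (hA2 : A ^ 2 = 0) (s : ℕ) (hs : 0 < s)
    (B : Matrix (Fin n) (Fin n) ℂ) :
    {μ : ℂ | μ ∈ spectrum ℂ (A * B ^ s + B ^ s * A) ∧ μ ≠ 0}.ncard ≤ 2 := by
  set C := B ^ s with hC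
  set N := A * C with hN
  set S := {μ : ℂ | μ ∈ spectrum ℂ (A * C + C * A) ∧ μ ≠ 0} with hS
  have hAA : A * A = 0 := by rw [← pow_two]; exact hA2
  have hrank : N.rank ≤ 2 := hA ▸ Matrix.rank_mul_le_left A C
  -- every nonzero element of the spectrum of A*C + C*A is an eigenvalue of N = A*C
  have key : ∀ μ ∈ S, ∃ v, v ≠ 0 ∧ N.mulVec v = μ • v := by
    rintro μ ⟨hμ, hμ0⟩
    obtain ⟨v, hv0, hv⟩ := aux_eigvec _ hμ
    rw [Matrix.add_mulVec] at hv
    by_cases hu : A.mulVec v = 0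
    · refine ⟨v, hv0, ?_⟩
      have h1 : (C * A).mulVec v = 0 := by
        rw [← Matrix.mulVec_mulVec, hu, Matrix.mulVec_zero]
      rwa [h1, add_zero] at hv
    · refine ⟨A.mulVec v, hu, ?_⟩
      have := congrArg (A.mulVec) hv
      rw [Matrix.mulVec_add, Matrix.mulVec_mulVec, Matrix.mulVec_mulVec,
        Matrix.mulVec_smul] at this
      have e1 : A * (A * C) = 0 := by rw [← mul_assoc, hAA, zero_mul]
      have e2 : A * (C * A) = N * A := by rw [hN, mul_assoc]
      rw [e1, e2, Matrix.zero_mulVec, zero_add, ← Matrix.mulVec_mulVec] at this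
      exact this
  -- conclude the cardinality bound
  have no3 : ∀ a ∈ S, ∀ b ∈ S, ∀ c ∈ S, a = b ∨ a = c ∨ b = c := by
    intro a ha b hb c hc
    by_contra hcon
    push_neg at hcon
    obtain ⟨hab, hac, hbc⟩ := hcon
    obtain ⟨va, hva0, hva⟩ := key a ha
    obtain ⟨vb, hvb0, hvb⟩ := key b hb
    obtain ⟨vc, hvc0, hvc⟩ := key c hc
    exact aux_no3 N hrank a b c ha.2 hb.2 hc.2 hab hac hbc va vb vc
      hva0 hvb0 hvc0 hva hvb hvc
  show S.ncard ≤ 2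
  rcases Set.eq_empty_or_nonempty S with h | ⟨a, ha⟩
  · simp [h]
  by_cases hone : ∀ x ∈ S, x = a
  · have hsub : S ⊆ {a} := fun x hx => hone x hx
    calc S.ncard ≤ ({a} : Set ℂ).ncard :=
          Set.ncard_le_ncard hsub (Set.finite_singleton a)
      _ ≤ 2 := by simp
  · push_neg at hone
    obtain ⟨b, hb, hba⟩ := hone
    have hsub : S ⊆ {a, b} := by
      intro x hx
      rcases no3 x hx a ha b hb with h | h | h
      · exact Set.mem_insert_iff.2 (Or.inl h)
      · exact Set.mem_insert_iff.2 (Or.inr h)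
      · exact absurd h.symm hba
    calc S.ncard ≤ ({a, b} : Set ℂ).ncard :=
          Set.ncard_le_ncard hsub ((Set.finite_singleton b).insert a)
      _ ≤ 2 := by
          refine le_trans (Set.ncard_insert_le a {b}) ?_
          simp
end

section
/- Let P, Q be rank-one idempotent n×n complex matrices with PQ = QP = 0. Then there is no rank-one idempotent R such that both (PR + RP)/2 and (QR + RQ)/2 are rank-one idempotents. -/
open Matrix

def IsRankOneIdem {n : ℕ} (M : Matrix (Fin n) (Fin n) ℂ) : Prop :=
  M * M = M ∧ M.rank = 1

lemma exists_vmv {n : ℕ} {M : Matrix (Fin n) (Fin n) ℂ} (h : M.rank = 1) :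
    ∃ u v : Fin n → ℂ, M = vecMulVec u v := by
  rw [Matrix.rank] at h
  obtain ⟨w, -, hw⟩ := finrank_eq_one_iff'.mp h
  refine ⟨w.1, fun j => (hw ⟨M.mulVec (Pi.single j 1), LinearMap.mem_range_self _ _⟩).choose, ?_⟩
  ext i j
  have hc := (hw ⟨M.mulVec (Pi.single j 1), LinearMap.mem_range_self _ _⟩).choose_spec
  have h2 : (hw ⟨M.mulVec (Pi.single j 1), LinearMap.mem_range_self _ _⟩).choose • w.1
      = M.mulVec (Pi.single j 1) := congrArg Subtype.val hc
  have h3 := congrFun h2 i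
  simp only [Pi.smul_apply, smul_eq_mul] at h3
  rw [vecMulVec_apply, mul_comm, h3]
  simp [Matrix.mulVec_single]

lemma vmv_sandwich {n : ℕ} (u v : Fin n → ℂ) (N : Matrix (Fin n) (Fin n) ℂ) :
    vecMulVec u v * N * vecMulVec u v = (vecMulVec u v * N).trace • vecMulVec u v := by
  ext i j
  simp only [Matrix.mul_apply, vecMulVec_apply, Matrix.trace, Matrix.diag,
    Matrix.smul_apply, smul_eq_mul, Finset.sum_mul, Finset.mul_sum]
  apply Finset.sum_congr rfl
  intro l _
  apply Finset.sum_congr rfl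
  intro k _
  ring

lemma rank_one_facts {n : ℕ} {M : Matrix (Fin n) (Fin n) ℂ} (h : IsRankOneIdem M) :
    M.trace = 1 ∧ ∀ N, M * N * M = (M * N).trace • M := by
  obtain ⟨u, v, rfl⟩ := exists_vmv h.2
  refine ⟨?_, fun N => vmv_sandwich u v N⟩
  have h1 := vmv_sandwich u v 1
  rw [mul_one, h.1] at h1
  have hne : vecMulVec u v ≠ 0 := by
    intro h0
    rw [h0] at h
    have := h.2
    rw [Matrix.rank_zero] at this
    exact one_ne_zero this.symm
  by_contra htr
  have : ((vecMulVec u v).trace - 1) • vecMulVec u v = 0 := by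
    rw [sub_smul, one_smul, ← h1, sub_self]
  rcases smul_eq_zero.mp this with hc | hc
  · exact htr (by linear_combination hc)
  · exact hne hc

theorem stmt_12 (n : ℕ) (P Q : Matrix (Fin n) (Fin n) ℂ)
    (hP : IsRankOneIdem P) (hQ : IsRankOneIdem Q)
    (hPQ : P * Q = 0) (hQP : Q * P = 0) :
    ¬ ∃ R : Matrix (Fin n) (Fin n) ℂ, IsRankOneIdem R ∧
      IsRankOneIdem ((1 / 2 : ℂ) • (P * R + R * P)) ∧
      IsRankOneIdem ((1 / 2 : ℂ) • (Q * R + R * Q)) := by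
  rintro ⟨R, hR, hA, hB⟩
  obtain ⟨trP, keyP⟩ := rank_one_facts hP
  obtain ⟨trQ, keyQ⟩ := rank_one_facts hQ
  obtain ⟨trR, keyR⟩ := rank_one_facts hR
  obtain ⟨trA, -⟩ := rank_one_facts hA
  obtain ⟨trB, -⟩ := rank_one_facts hB
  -- traces
  have hPR : (P * R).trace = 1 := by
    rw [Matrix.trace_smul, Matrix.trace_add, Matrix.trace_mul_comm R P] at trA
    simp only [smul_eq_mul] at trA
    linear_combination trA
  have hQR : (Q * R).trace = 1 := by
    rw [Matrix.trace_smul, Matrix.trace_add, Matrix.trace_mul_comm R Q] at trB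
    simp only [smul_eq_mul] at trB
    linear_combination trB
  have hRP : (R * P).trace = 1 := by rw [Matrix.trace_mul_comm]; exact hPR
  have hRQ : (R * Q).trace = 1 := by rw [Matrix.trace_mul_comm]; exact hQR
  have RPR : R * P * R = R := by rw [keyR P, hRP, one_smul]
  have PRP : P * R * P = P := by rw [keyP R, hPR, one_smul]
  have RQR : R * Q * R = R := by rw [keyR Q, hRQ, one_smul]
  have QRQ : Q * R * Q = Q := by rw [keyQ R, hQR, one_smul]
  -- key identities
  have expand : ∀ S : Matrix (Fin n) (Fin n) ℂ, S * S = S → S * R * S = S → R * S * R = R →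
      (S * R + R * S) * (S * R + R * S) = (S * R + R * S) + (S + R) := by
    intro S hS hSRS hRSR
    have h1 : S * R * (S * R) = S * R := by rw [← mul_assoc, hSRS]
    have h2 : S * R * (R * S) = S := by rw [← mul_assoc, mul_assoc S R R, hR.1, hSRS]
    have h3 : R * S * (S * R) = R := by rw [← mul_assoc, mul_assoc R S S, hS, hRSR]
    have h4 : R * S * (R * S) = R * S := by rw [← mul_assoc, hRSR]
    rw [add_mul, mul_add, mul_add, h1, h2, h3, h4]
    abel
  have reduce : ∀ S : Matrix (Fin n) (Fin n) ℂ,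
      ((1/2 : ℂ) • (S * R + R * S)) * ((1/2 : ℂ) • (S * R + R * S)) = (1/2 : ℂ) • (S * R + R * S) →
      (S * R + R * S) * (S * R + R * S) = (S * R + R * S) + (S * R + R * S) := by
    intro S h
    rw [smul_mul_smul_comm] at h
    have h2 := congrArg (fun X => (4 : ℂ) • X) h
    simp only [smul_smul] at h2
    norm_num at h2
    rw [h2]; module
  have keyPid : P + R = P * R + R * P := by
    have e := reduce P hA.1
    rw [expand P hP.1 PRP RPR] at e
    exact add_left_cancel e
  have keyQid : Q + R = Q * R + R * Q := by
    have e := reduce Q hB.1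
    rw [expand Q hQ.1 QRQ RQR] at e
    exact add_left_cancel e
  -- use PQ = QP = 0
  have e1 : Q * R = Q * R * P := by
    have := congrArg (fun X => Q * X) keyPid
    simp only [mul_add] at this
    rw [hQP, ← mul_assoc, ← mul_assoc, hQP, zero_mul, zero_add, zero_add] at this
    exact this
  have e2 : R * P = Q * R * P := by
    have := congrArg (fun X => X * P) keyQid
    simp only [add_mul] at this
    rw [hQP, mul_assoc R Q P, hQP, mul_zero, add_zero, zero_add] at this
    exact this
  have e3 : R * Q = P * R * Q := by
    have := congrArg (fun X => X * Q) keyPid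
    simp only [add_mul] at this
    rw [hPQ, mul_assoc R P Q, hPQ, mul_zero, add_zero, zero_add] at this
    exact this
  have e4 : P * R = P * R * Q := by
    have := congrArg (fun X => P * X) keyQid
    simp only [mul_add] at this
    rw [hPQ, ← mul_assoc, ← mul_assoc, hPQ, zero_mul, zero_add, zero_add] at this
    exact this
  have eQRRP : Q * R = R * P := by rw [e1, ← e2]
  have eRQPR : R * Q = P * R := by rw [e3, ← e4]
  have hQP' : Q + R = P + R := by
    rw [keyQid, eQRRP, eRQPR, keyPid, add_comm]
  have hQeqP : Q = P := add_right_cancel hQP'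
  rw [hQeqP, hP.1] at hPQ
  rw [hPQ] at hP
  have := hP.2
  rw [Matrix.rank_zero] at this
  exact one_ne_zero this.symm
end

section
/- Let P, Q be rank-one idempotent n×n complex matrices (n ≥ 2) with spectrum(PQ + QP) = {0} but PQ ≠ 0 or QP ≠ 0. Then there exists a rank-one idempotent R such that both (PR + RP)/2 and (QR + RQ)/2 are rank-one idempotents. -/
open Matrix

namespace Stmt13Aux

lemma vecMulVec_mul {n : ℕ} (x f y g : Fin n → ℂ) :
    (vecMulVec x f) * (vecMulVec y g) = (f ⬝ᵥ y) • vecMulVec x g := by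
  ext i j
  simp only [mul_apply, vecMulVec_apply, Matrix.smul_apply, smul_eq_mul, dotProduct, Finset.sum_mul]
  exact Finset.sum_congr rfl fun k _ => by ring

lemma vecMulVec_mulVec {n : ℕ} (x g v : Fin n → ℂ) :
    (vecMulVec x g).mulVec v = (g ⬝ᵥ v) • x := by
  funext i
  simp only [mulVec, dotProduct, vecMulVec_apply, Pi.smul_apply, smul_eq_mul, Finset.sum_mul]
  exact Finset.sum_congr rfl fun k _ => by ring

lemma isRankOneIdem_vecMulVec {n : ℕ} {x f : Fin n → ℂ} (h : f ⬝ᵥ x = 1) :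
    IsRankOneIdem (vecMulVec x f) := by
  have hx : x ≠ 0 := by
    rintro rfl
    simp at h
  constructor
  · rw [vecMulVec_mul, h, one_smul]
  · have hle : (vecMulVec x f).rank ≤ 1 := by
      rw [vecMulVec_eq (Fin 1)]
      refine (rank_mul_le_left _ _).trans ?_
      exact (rank_le_card_width (R := ℂ) (replicateCol (Fin 1) x)).trans_eq (by simp)
    have hne : (vecMulVec x f).rank ≠ 0 := by
      intro h0
      rw [Matrix.rank, Submodule.finrank_eq_zero] at h0
      have hmem : x ∈ LinearMap.range (vecMulVec x f).mulVecLin :=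
        ⟨x, by rw [mulVecLin_apply, vecMulVec_mulVec, h, one_smul]⟩
      rw [h0] at hmem
      exact hx (by simpa using hmem)
    omega

lemma exists_vecMulVec {n : ℕ} {M : Matrix (Fin n) (Fin n) ℂ}
    (hM : IsRankOneIdem M) : ∃ x f : Fin n → ℂ, f ⬝ᵥ x = 1 ∧ M = vecMulVec x f := by
  obtain ⟨hidem, hrank⟩ := hM
  have h1 : Module.finrank ℂ (LinearMap.range M.mulVecLin) = 1 := hrank
  rw [finrank_eq_one_iff'] at h1
  obtain ⟨⟨x, hxmem⟩, hx0, hall⟩ := h1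
  have hcol : ∀ j, ∃ c : ℂ, c • x = M.mulVec (Pi.single j 1) := by
    intro j
    obtain ⟨c, hc⟩ := hall ⟨M.mulVec (Pi.single j 1), ⟨Pi.single j 1, rfl⟩⟩
    exact ⟨c, congrArg Subtype.val hc⟩
  choose c hc using hcol
  have hMeq : M = vecMulVec x c := by
    ext i j
    have h2 := congrFun (hc j) i
    simp only [Pi.smul_apply, smul_eq_mul] at h2
    have hMj : M.mulVec (Pi.single j 1) i = M i j := by
      simp [mulVec, dotProduct, Pi.single_apply]
    rw [hMj] at h2
    rw [vecMulVec_apply, ← h2]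
    ring
  have hM0 : M ≠ 0 := by
    intro h
    rw [h, Matrix.rank_zero] at hrank
    exact one_ne_zero hrank.symm
  have hpair : c ⬝ᵥ x = 1 := by
    have h2 : (c ⬝ᵥ x) • vecMulVec x c = vecMulVec x c := by
      rw [← vecMulVec_mul, ← hMeq, hidem, hMeq]
    by_contra hcx
    have h3 : ((c ⬝ᵥ x) - 1) • vecMulVec x c = 0 := by
      rw [sub_smul, one_smul, h2, sub_self]
    rcases smul_eq_zero.mp h3 with h | h
    · exact hcx (by linear_combination h)
    · exact hM0 (hMeq.trans h)
  exact ⟨x, c, hpair, hMeq⟩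

end Stmt13Aux

open Stmt13Aux in
theorem stmt_13 (n : ℕ) (hn : 2 ≤ n) (P Q : Matrix (Fin n) (Fin n) ℂ)
    (hP : IsRankOneIdem P) (hQ : IsRankOneIdem Q)
    (hspec : spectrum ℂ (P * Q + Q * P) = {0})
    (hne : P * Q ≠ 0 ∨ Q * P ≠ 0) :
    ∃ R : Matrix (Fin n) (Fin n) ℂ, IsRankOneIdem R ∧
      IsRankOneIdem ((1 / 2 : ℂ) • (P * R + R * P)) ∧
      IsRankOneIdem ((1 / 2 : ℂ) • (Q * R + R * Q)) := by
  obtain ⟨x, f, hfx, hPe⟩ := exists_vecMulVec hP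
  obtain ⟨y, g, hgy, hQe⟩ := exists_vecMulVec hQ
  subst hPe hQe
  have hab : f ⬝ᵥ y ≠ 0 ∨ g ⬝ᵥ x ≠ 0 := by
    rcases hne with h | h
    · exact Or.inl fun h0 => h (by rw [Stmt13Aux.vecMulVec_mul, h0, zero_smul])
    · exact Or.inr fun h0 => h (by rw [Stmt13Aux.vecMulVec_mul, h0, zero_smul])
  rcases hab with ha0 | hb0
  · set a := f ⬝ᵥ y with ha
    refine ⟨vecMulVec y (a⁻¹ • f), isRankOneIdem_vecMulVec (by
      rw [smul_dotProduct, ← ha, smul_eq_mul, inv_mul_cancel₀ ha0]), ?_, ?_⟩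
    · have heq : (1 / 2 : ℂ) • (vecMulVec x f * vecMulVec y (a⁻¹ • f)
            + vecMulVec y (a⁻¹ • f) * vecMulVec x f)
          = vecMulVec ((1 / 2 : ℂ) • (x + a⁻¹ • y)) f := by
        rw [Stmt13Aux.vecMulVec_mul, Stmt13Aux.vecMulVec_mul, smul_dotProduct, hfx, ← ha]
        ext i j
        simp only [Matrix.smul_apply, Matrix.add_apply, vecMulVec_apply, Pi.smul_apply, Pi.add_apply,
          smul_eq_mul]
        field_simp
      rw [heq]
      refine isRankOneIdem_vecMulVec ?_
      rw [dotProduct_smul, dotProduct_add, hfx, dotProduct_smul, ← ha, smul_eq_mul,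
        smul_eq_mul, inv_mul_cancel₀ ha0]
      norm_num
    · have heq : (1 / 2 : ℂ) • (vecMulVec y g * vecMulVec y (a⁻¹ • f)
            + vecMulVec y (a⁻¹ • f) * vecMulVec y g)
          = vecMulVec y ((1 / 2 : ℂ) • (g + a⁻¹ • f)) := by
        rw [Stmt13Aux.vecMulVec_mul, Stmt13Aux.vecMulVec_mul, smul_dotProduct, hgy, ← ha]
        ext i j
        simp only [Matrix.smul_apply, Matrix.add_apply, vecMulVec_apply, Pi.smul_apply, Pi.add_apply,
          smul_eq_mul]
        field_simp
        ring
      rw [heq]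
      refine isRankOneIdem_vecMulVec ?_
      rw [smul_dotProduct, add_dotProduct, hgy, smul_dotProduct, ← ha, smul_eq_mul,
        smul_eq_mul, inv_mul_cancel₀ ha0]
      norm_num
  · set b := g ⬝ᵥ x with hb
    refine ⟨vecMulVec x (b⁻¹ • g), isRankOneIdem_vecMulVec (by
      rw [smul_dotProduct, ← hb, smul_eq_mul, inv_mul_cancel₀ hb0]), ?_, ?_⟩
    · have heq : (1 / 2 : ℂ) • (vecMulVec x f * vecMulVec x (b⁻¹ • g)
            + vecMulVec x (b⁻¹ • g) * vecMulVec x f)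
          = vecMulVec x ((1 / 2 : ℂ) • (f + b⁻¹ • g)) := by
        rw [Stmt13Aux.vecMulVec_mul, Stmt13Aux.vecMulVec_mul, smul_dotProduct, hfx, ← hb]
        ext i j
        simp only [Matrix.smul_apply, Matrix.add_apply, vecMulVec_apply, Pi.smul_apply, Pi.add_apply,
          smul_eq_mul]
        field_simp
        ring
      rw [heq]
      refine isRankOneIdem_vecMulVec ?_
      rw [smul_dotProduct, add_dotProduct, hfx, smul_dotProduct, ← hb, smul_eq_mul,
        smul_eq_mul, inv_mul_cancel₀ hb0]
      norm_num
    · have heq : (1 / 2 : ℂ) • (vecMulVec y g * vecMulVec x (b⁻¹ • g)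
            + vecMulVec x (b⁻¹ • g) * vecMulVec y g)
          = vecMulVec ((1 / 2 : ℂ) • (y + b⁻¹ • x)) g := by
        rw [Stmt13Aux.vecMulVec_mul, Stmt13Aux.vecMulVec_mul, smul_dotProduct, hgy, ← hb]
        ext i j
        simp only [Matrix.smul_apply, Matrix.add_apply, vecMulVec_apply, Pi.smul_apply, Pi.add_apply,
          smul_eq_mul]
        field_simp
      rw [heq]
      refine isRankOneIdem_vecMulVec ?_
      rw [dotProduct_smul, dotProduct_add, hgy, dotProduct_smul, ← hb, smul_eq_mul,
        smul_eq_mul, inv_mul_cancel₀ hb0]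
      norm_num
end

section
/- Let r, s be positive integers with r ≠ s, γ = 2^r, δ = 2^s, and B₁ as above (B₁^k = 2^{k−1}(2^k E + F) with E = [[1,1],[1,1]], F = [[1,−1],[−1,1]]). Let A₀ = [[1,0],[0,0]]. Then det(B₁^r A₀ B₁^s + B₁^s A₀ B₁^r) = −4^{r+s−1}(γ − δ)² < 0; in particular B₁^r A₀ B₁^s + B₁^s A₀ B₁^r has one positive and one negative eigenvalue. -/
lemma pow_B (k : ℕ) : (!![3,1;1,3] : Matrix (Fin 2) (Fin 2) ℝ) ^ (k+1) =
    !![(4^(k+1)+2^(k+1))/2, (4^(k+1)-2^(k+1))/2; (4^(k+1)-2^(k+1))/2, (4^(k+1)+2^(k+1))/2] := by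
  induction k with
  | zero => norm_num
  | succ n ih =>
    rw [pow_succ, ih, Matrix.mul_fin_two]
    congr 1 <;> ring_nf

lemma spec_neg_det (M : Matrix (Fin 2) (Fin 2) ℝ) (hd : M.det < 0) :
    ∃ μ ν : ℝ, μ ∈ spectrum ℝ M ∧ ν ∈ spectrum ℝ M ∧ 0 < μ ∧ ν < 0 := by
  have mem : ∀ μ : ℝ, (μ - M 0 0) * (μ - M 1 1) - M 0 1 * M 1 0 = 0 → μ ∈ spectrum ℝ M := by
    intro μ h
    rw [spectrum.mem_iff]
    intro hu
    rw [Matrix.isUnit_iff_isUnit_det, isUnit_iff_ne_zero] at hu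
    apply hu
    simp [Matrix.det_fin_two, Matrix.algebraMap_matrix_apply]
    linarith
  have hdet : M.det = M 0 0 * M 1 1 - M 0 1 * M 1 0 := Matrix.det_fin_two M
  rw [hdet] at hd
  have hD : 0 < (M 0 0 + M 1 1)^2 - 4*(M 0 0 * M 1 1 - M 0 1 * M 1 0) := by
    nlinarith [sq_nonneg (M 0 0 + M 1 1)]
  set t := M 0 0 + M 1 1 with ht
  set D := t^2 - 4*(M 0 0 * M 1 1 - M 0 1 * M 1 0) with hDe
  have hsq : Real.sqrt D ^ 2 = D := Real.sq_sqrt hD.le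
  have habs : |t| < Real.sqrt D := by
    rw [← Real.sqrt_sq_eq_abs]
    exact Real.sqrt_lt_sqrt (sq_nonneg t) (by nlinarith)
  have h1 := abs_lt.mp habs
  refine ⟨(t + Real.sqrt D)/2, (t - Real.sqrt D)/2, mem _ (by nlinarith [hsq]),
    mem _ (by nlinarith [hsq]), by linarith [h1.2], by linarith [h1.1]⟩

theorem stmt_15 (r s : ℕ) (hr : 0 < r) (hs : 0 < s) (hrs : r ≠ s) :
    letI E : Matrix (Fin 2) (Fin 2) ℝ := !![1, 1; 1, 1]
    letI F : Matrix (Fin 2) (Fin 2) ℝ := !![1, -1; -1, 1]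
    letI B₁ : Matrix (Fin 2) (Fin 2) ℝ := (2 : ℝ) • E + F
    letI A₀ : Matrix (Fin 2) (Fin 2) ℝ := !![1, 0; 0, 0]
    letI M : Matrix (Fin 2) (Fin 2) ℝ := B₁ ^ r * A₀ * B₁ ^ s + B₁ ^ s * A₀ * B₁ ^ r
    letI γ : ℝ := 2 ^ r
    letI δ : ℝ := 2 ^ s
    M.det = -(4 : ℝ) ^ (r + s - 1) * (γ - δ) ^ 2 ∧ M.det < 0 ∧
      ∃ μ ν : ℝ, μ ∈ spectrum ℝ M ∧ ν ∈ spectrum ℝ M ∧ 0 < μ ∧ ν < 0 := by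
  have hB : ((2:ℝ) • (!![1,1;1,1] : Matrix (Fin 2) (Fin 2) ℝ) + !![1,-1;-1,1]) = !![3,1;1,3] := by
    norm_num [Matrix.smul_of, ← Matrix.ext_iff, Fin.forall_fin_two]
  simp only [hB]
  obtain ⟨r', rfl⟩ : ∃ r', r = r' + 1 := ⟨r - 1, (Nat.succ_pred_eq_of_pos hr).symm⟩
  obtain ⟨s', rfl⟩ : ∃ s', s = s' + 1 := ⟨s - 1, (Nat.succ_pred_eq_of_pos hs).symm⟩
  rw [pow_B, pow_B]
  set M : Matrix (Fin 2) (Fin 2) ℝ :=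
    !![(4^(r'+1)+2^(r'+1))/2, (4^(r'+1)-2^(r'+1))/2; (4^(r'+1)-2^(r'+1))/2, (4^(r'+1)+2^(r'+1))/2]
      * !![1,0;0,0] *
    !![(4^(s'+1)+2^(s'+1))/2, (4^(s'+1)-2^(s'+1))/2; (4^(s'+1)-2^(s'+1))/2, (4^(s'+1)+2^(s'+1))/2]
    + !![(4^(s'+1)+2^(s'+1))/2, (4^(s'+1)-2^(s'+1))/2; (4^(s'+1)-2^(s'+1))/2, (4^(s'+1)+2^(s'+1))/2]
      * !![1,0;0,0] *
    !![(4^(r'+1)+2^(r'+1))/2, (4^(r'+1)-2^(r'+1))/2; (4^(r'+1)-2^(r'+1))/2, (4^(r'+1)+2^(r'+1))/2]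
    with hM
  have hdet : M.det = -(4 : ℝ) ^ (r' + 1 + (s' + 1) - 1) * ((2:ℝ)^(r'+1) - 2^(s'+1)) ^ 2 := by
    rw [hM]
    rw [Matrix.det_fin_two]
    simp only [Matrix.mul_fin_two, Matrix.add_apply, Matrix.of_apply,
      Matrix.cons_val', Matrix.cons_val_zero, Matrix.cons_val_one, Matrix.head_cons,
      Matrix.head_fin_const, Matrix.empty_val', Matrix.cons_val_fin_one]
    rw [show r' + 1 + (s' + 1) - 1 = r' + s' + 1 from by omega]
    simp only [show (4:ℝ) = 2^2 from by norm_num, ← pow_mul]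
    ring_nf
  have hne : ((2:ℝ)^(r'+1) - 2^(s'+1)) ≠ 0 := by
    refine sub_ne_zero.mpr fun h => hrs ?_
    exact Nat.pow_right_injective (le_refl 2) (by exact_mod_cast h)
  have hneg : M.det < 0 := by
    rw [hdet]
    have h2 : (0:ℝ) < ((2:ℝ)^(r'+1) - 2^(s'+1))^2 := by positivity
    have h3 : (0:ℝ) < (4:ℝ) ^ (r' + 1 + (s' + 1) - 1) := by positivity
    nlinarith
  exact ⟨hdet, hneg, spec_neg_det M hneg⟩
end

section
/- Let H = ℂ^n (n ≥ 3), s > 0 an integer, and A a nonzero Hermitian n×n matrix of rank at least 2. Then there exists a Hermitian matrix B of rank at most 3 such that AB^s + B^s A has rank 3 and three distinct nonzero (real) eigenvalues. -/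
open Matrix


lemma aux_fb_eq (m : ℕ) (X : Matrix (Fin 3) (Fin 3) ℂ) :
    let E : Matrix (Fin 3 ⊕ Fin m) (Fin 3) ℂ := Matrix.of fun p j => if p = Sum.inl j then 1 else 0
    Matrix.fromBlocks X 0 0 (0 : Matrix (Fin m) (Fin m) ℂ) = E * X * Eᵀ ∧ Eᵀ * E = 1 := by
  intro E
  constructor
  · ext p q
    rcases p with a | a <;> rcases q with b | b <;>
      simp [E, Matrix.mul_apply, Finset.sum_ite_eq, Matrix.fromBlocks, Matrix.transpose_apply,
        Finset.mul_sum, Finset.sum_mul]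
  · ext j k
    simp [E, Matrix.mul_apply, Matrix.one_apply, Fintype.sum_sum_type, Finset.sum_ite_eq,
      eq_comm]

lemma aux_rank_fb (m : ℕ) (X : Matrix (Fin 3) (Fin 3) ℂ) :
    (Matrix.fromBlocks X 0 0 (0 : Matrix (Fin m) (Fin m) ℂ)).rank = X.rank := by
  obtain ⟨h1, h2⟩ := aux_fb_eq m X
  set E : Matrix (Fin 3 ⊕ Fin m) (Fin 3) ℂ := Matrix.of fun p j => if p = Sum.inl j then 1 else 0
  apply le_antisymm
  · rw [h1]
    exact le_trans (Matrix.rank_mul_le_left _ _) (Matrix.rank_mul_le_right _ _)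
  · have hX : X = Eᵀ * (Matrix.fromBlocks X 0 0 (0 : Matrix (Fin m) (Fin m) ℂ)) * E := by
      rw [h1]
      have : Eᵀ * (E * X * Eᵀ) * E = (Eᵀ * E) * X * (Eᵀ * E) := by
        simp only [Matrix.mul_assoc]
      rw [this, h2, one_mul, mul_one]
    conv_lhs => rw [hX]
    exact le_trans (Matrix.rank_mul_le_left _ _) (Matrix.rank_mul_le_right _ _)

lemma aux_mem_spectrum {k : Type*} [Fintype k] [DecidableEq k] (N : Matrix k k ℂ) (μ : ℂ)
    (h : (μ • (1 : Matrix k k ℂ) - N).det = 0) : μ ∈ spectrum ℂ N := by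
  rw [spectrum.mem_iff]
  intro hu
  rw [Matrix.isUnit_iff_isUnit_det, isUnit_iff_ne_zero] at hu
  apply hu
  rw [Algebra.algebraMap_eq_smul_one]
  exact h

lemma aux_smul_one_sub_fb (m : ℕ) (X : Matrix (Fin 3) (Fin 3) ℂ) (μ : ℂ) :
    μ • (1 : Matrix (Fin 3 ⊕ Fin m) (Fin 3 ⊕ Fin m) ℂ) - Matrix.fromBlocks X 0 0 0 =
      Matrix.fromBlocks (μ • 1 - X) 0 0 (μ • (1 : Matrix (Fin m) (Fin m) ℂ)) := by
  ext p q
  rcases p with a | a <;> rcases q with b | b <;>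
    simp [Matrix.fromBlocks, Matrix.one_apply, Matrix.sub_apply, Matrix.smul_apply]

lemma aux_mem_spectrum_fb (m : ℕ) (X : Matrix (Fin 3) (Fin 3) ℂ) (μ : ℂ)
    (h : (μ • (1 : Matrix (Fin 3) (Fin 3) ℂ) - X).det = 0) :
    μ ∈ spectrum ℂ (Matrix.fromBlocks X 0 0 (0 : Matrix (Fin m) (Fin m) ℂ)) := by
  apply aux_mem_spectrum
  rw [aux_smul_one_sub_fb, Matrix.det_fromBlocks_zero₂₁, h, zero_mul]

lemma aux_fb_pow (m : ℕ) (X : Matrix (Fin 3) (Fin 3) ℂ) (s : ℕ) (hs : 0 < s) :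
    (Matrix.fromBlocks X 0 0 (0 : Matrix (Fin m) (Fin m) ℂ)) ^ s =
      Matrix.fromBlocks (X ^ s) 0 0 0 := by
  induction s with
  | zero => omega
  | succ k ih =>
    rcases Nat.eq_zero_or_pos k with hk | hk
    · subst hk; simp
    · rw [pow_succ, pow_succ, ih hk, Matrix.fromBlocks_multiply]
      simp

lemma aux_idem_pow {k : Type*} [Fintype k] [DecidableEq k] (C : Matrix k k ℂ) (h : C * C = C)
    (s : ℕ) (hs : 0 < s) : C ^ s = C := by
  induction s with
  | zero => omega
  | succ r ih =>
    rcases Nat.eq_zero_or_pos r with hr | hr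
    · subst hr; simp
    · rw [pow_succ, ih hr, h]


lemma aux_third (n : ℕ) (hn : 3 ≤ n) (u v : Fin n) : ∃ r : Fin n, r ≠ u ∧ r ≠ v := by
  by_contra h
  push_neg at h
  have hsub : (Finset.univ : Finset (Fin n)) ⊆ {u, v} := by
    intro r _
    by_cases h1 : r = u
    · simp [h1]
    · simp [h r h1]
  have := Finset.card_le_card hsub
  simp [Finset.card_univ] at this
  have h2 : ({u, v} : Finset (Fin n)).card ≤ 2 := Finset.card_insert_le _ _ |>.trans (by simp)
  omega

lemma aux_pick (n : ℕ) (hn : 3 ≤ n) (f : Fin n → ℝ) (u v : Fin n) (huv : u ≠ v)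
    (hu : f u ≠ 0) (hv : f v ≠ 0) (p q : Fin n) (hpq : f p ≠ f q) :
    ∃ i j k : Fin n, i ≠ j ∧ i ≠ k ∧ j ≠ k ∧ f j ≠ 0 ∧ f i ≠ f k := by
  by_cases h : f u = f v
  · -- get r with f r ≠ f u
    have hr : ∃ r, f r ≠ f u := by
      by_cases hp : f p = f u
      · exact ⟨q, by rw [← hp]; exact fun hh => hpq hh.symm⟩
      · exact ⟨p, hp⟩
    obtain ⟨r, hrfu⟩ := hr
    have hru : r ≠ u := fun hh => hrfu (by rw [hh])
    have hrv : r ≠ v := fun hh => hrfu (by rw [hh, ← h])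
    exact ⟨v, u, r, huv.symm, hrv.symm, hru.symm, hu, by rw [← h]; exact fun hh => hrfu hh.symm⟩
  · obtain ⟨r, hru, hrv⟩ := aux_third n hn u v
    by_cases h2 : f r = f u
    · exact ⟨v, u, r, huv.symm, hrv.symm, hru.symm, hu, by rw [h2]; exact fun hh => h hh.symm⟩
    · exact ⟨u, v, r, huv, hru.symm, hrv.symm, hv, fun hh => h2 hh.symm⟩

lemma aux_perm3 {n : ℕ} (x y z i j k : Fin n) (hxy : x ≠ y) (hxz : x ≠ z) (hyz : y ≠ z)
    (hij : i ≠ j) (hik : i ≠ k) (hjk : j ≠ k) :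
    ∃ π : Equiv.Perm (Fin n), π x = i ∧ π y = j ∧ π z = k := by
  set π₁ := Equiv.swap x i with hπ₁
  set y₁ := π₁ y with hy₁
  set z₁ := π₁ z with hz₁
  have hy₁i : y₁ ≠ i := by
    rw [hy₁, ← Equiv.swap_apply_left x i]; exact fun hh => hxy.symm (π₁.injective hh)
  have hz₁i : z₁ ≠ i := by
    rw [hz₁, ← Equiv.swap_apply_left x i]; exact fun hh => hxz.symm (π₁.injective hh)
  have hy₁z₁ : y₁ ≠ z₁ := fun hh => hyz (π₁.injective hh)
  set π₂ := Equiv.swap y₁ j with hπ₂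
  set z₂ := π₂ z₁ with hz₂
  have hπ₂i : π₂ i = i := Equiv.swap_apply_of_ne_of_ne hy₁i.symm hij
  have hz₂j : z₂ ≠ j := by
    rw [hz₂, ← Equiv.swap_apply_left y₁ j]; exact fun hh => hy₁z₁.symm (π₂.injective hh)
  have hz₂i : z₂ ≠ i := by
    rw [hz₂, ← hπ₂i]; exact fun hh => hz₁i (π₂.injective hh)
  set π₃ := Equiv.swap z₂ k with hπ₃
  refine ⟨(π₁.trans π₂).trans π₃, ?_, ?_, ?_⟩
  · simp only [Equiv.trans_apply]
    rw [hπ₁, Equiv.swap_apply_left, hπ₂i, hπ₃]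
    exact Equiv.swap_apply_of_ne_of_ne hz₂i.symm hik
  · simp only [Equiv.trans_apply]
    rw [← hy₁, hπ₂, Equiv.swap_apply_left, hπ₃]
    exact Equiv.swap_apply_of_ne_of_ne hz₂j.symm hjk
  · simp only [Equiv.trans_apply]
    rw [← hz₁, ← hz₂, hπ₃, Equiv.swap_apply_left]


lemma aux_pick_x (a b c : ℝ) (hb : b ≠ 0) (hac : a ≠ c) :
    ∃ x : ℝ, 0 < x ∧ x < 1 ∧
      4*b^2 - 4*b*(a*x + c*(1-x)) - (a-c)^2*(x*(1-x)) ≠ 0 := by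
  by_contra h
  push_neg at h
  have h1 := h (1/4) (by norm_num) (by norm_num)
  have h2 := h (1/2) (by norm_num) (by norm_num)
  have h3 := h (3/4) (by norm_num) (by norm_num)
  have hac2 : (a - c)^2 = 0 := by linarith
  exact hac (by nlinarith [sq_nonneg (a - c)])

set_option maxHeartbeats 2000000 in
lemma caseA_core (d : Fin 3 → ℝ) (hb : d 1 ≠ 0) (hac : d 0 ≠ d 2) :
    ∃ C : Matrix (Fin 3) (Fin 3) ℂ, C.IsHermitian ∧ C * C = C ∧
      ∃ μ₁ μ₂ μ₃ : ℝ, μ₁ ≠ μ₂ ∧ μ₁ ≠ μ₃ ∧ μ₂ ≠ μ₃ ∧ μ₁ ≠ 0 ∧ μ₂ ≠ 0 ∧ μ₃ ≠ 0 ∧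
      (Matrix.diagonal (fun i => (d i : ℂ)) * C + C * Matrix.diagonal (fun i => (d i : ℂ))).det ≠ 0 ∧
      ((μ₁ : ℂ) • 1 - (Matrix.diagonal (fun i => (d i : ℂ)) * C + C * Matrix.diagonal (fun i => (d i : ℂ)))).det = 0 ∧
      ((μ₂ : ℂ) • 1 - (Matrix.diagonal (fun i => (d i : ℂ)) * C + C * Matrix.diagonal (fun i => (d i : ℂ)))).det = 0 ∧
      ((μ₃ : ℂ) • 1 - (Matrix.diagonal (fun i => (d i : ℂ)) * C + C * Matrix.diagonal (fun i => (d i : ℂ)))).det = 0 := by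
  set a : ℝ := d 0 with ha
  set b : ℝ := d 1 with hbd
  set c : ℝ := d 2 with hc
  obtain ⟨x, hx0, hx1, hq⟩ := aux_pick_x a b c hb hac
  set t : ℝ := Real.sqrt x with htdef
  set u : ℝ := Real.sqrt (1 - x) with hudef
  have ht2 : t^2 = x := Real.sq_sqrt hx0.le
  have hu2 : u^2 = 1 - x := Real.sq_sqrt (by linarith)
  have ht0 : 0 < t := Real.sqrt_pos.mpr hx0
  have hu0 : 0 < u := Real.sqrt_pos.mpr (by linarith)
  refine ⟨!![((t:ℂ))^2, 0, (t:ℂ)*(u:ℂ); 0, 1, 0; (t:ℂ)*(u:ℂ), 0, ((u:ℂ))^2], ?_, ?_, ?_⟩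
  · -- Hermitian
    rw [Matrix.IsHermitian]
    ext i j
    fin_cases i <;> fin_cases j <;>
      simp [Matrix.conjTranspose_apply, Complex.conj_ofReal]
  · -- idempotent
    have hc1 : ((t:ℂ))^2 + ((u:ℂ))^2 = 1 := by
      have : t^2 + u^2 = 1 := by rw [ht2, hu2]; ring
      exact_mod_cast congrArg (Complex.ofReal) this
    ext i j
    fin_cases i <;> fin_cases j <;>
      simp [Matrix.mul_apply, Fin.sum_univ_three] <;>
      first
        | linear_combination ((t:ℂ))^2 * hc1
        | linear_combination ((t:ℂ))*(u:ℂ) * hc1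
        | linear_combination ((u:ℂ))^2 * hc1
        | ring
  · -- eigenvalues part
    have htc : ((t:ℂ))^2 = (x:ℂ) := by exact_mod_cast congrArg Complex.ofReal ht2
    have huc : ((u:ℂ))^2 = 1 - (x:ℂ) := by
      have := congrArg Complex.ofReal hu2; push_cast at this; exact_mod_cast this
    have hD : Matrix.diagonal (fun i => (d i : ℂ)) = !![(a:ℂ),0,0;0,(b:ℂ),0;0,0,(c:ℂ)] := by
      ext i j
      fin_cases i <;> fin_cases j <;>
        simp [Matrix.diagonal_apply, ha, hbd, hc, Matrix.vecHead, Matrix.vecTail]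
    set P : ℝ := a*x + c*(1-x) with hP
    set Q : ℝ := (a-c)^2*(x*(1-x)) with hQ
    have hsubne : a - c ≠ 0 := sub_ne_zero.mpr hac
    have hsq : 0 < (a-c)^2 := lt_of_le_of_ne (sq_nonneg _) (Ne.symm (pow_ne_zero 2 hsubne))
    have hx01 : 0 < x*(1-x) := by nlinarith
    have hQpos : 0 < Q := mul_pos hsq hx01
    set R : ℝ := Real.sqrt (P^2 + Q) with hRdef
    have hR2 : R^2 = P^2 + Q := Real.sq_sqrt (by nlinarith [sq_nonneg P])
    have hRpos : 0 < R := Real.sqrt_pos.mpr (by nlinarith [sq_nonneg P])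
    have hPR : |P| < R := by nlinarith [sq_abs P, abs_nonneg P]
    have hPc : ((P:ℝ):ℂ) = (a:ℂ)*(x:ℂ) + (c:ℂ)*(1-(x:ℂ)) := by
      have := congrArg Complex.ofReal hP; push_cast at this; exact this
    have hQc : ((Q:ℝ):ℂ) = ((a:ℂ)-(c:ℂ))^2*((x:ℂ)*(1-(x:ℂ))) := by
      have := congrArg Complex.ofReal hQ; push_cast at this; exact this
    set N : Matrix (Fin 3) (Fin 3) ℂ :=
      Matrix.diagonal (fun i => (d i : ℂ)) * !![((t:ℂ))^2, 0, (t:ℂ)*(u:ℂ); 0, 1, 0; (t:ℂ)*(u:ℂ), 0, ((u:ℂ))^2] +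
      !![((t:ℂ))^2, 0, (t:ℂ)*(u:ℂ); 0, 1, 0; (t:ℂ)*(u:ℂ), 0, ((u:ℂ))^2] * Matrix.diagonal (fun i => (d i : ℂ)) with hNdef
    have hN : N = !![2*(a:ℂ)*(t:ℂ)^2, 0, ((a:ℂ)+(c:ℂ))*((t:ℂ)*(u:ℂ)); 0, 2*(b:ℂ), 0;
        ((a:ℂ)+(c:ℂ))*((t:ℂ)*(u:ℂ)), 0, 2*(c:ℂ)*(u:ℂ)^2] := by
      rw [hNdef, hD]
      ext i j
      fin_cases i <;> fin_cases j <;>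
        simp [Matrix.mul_apply, Fin.sum_univ_three] <;> ring
    have hdetgen : ∀ μ : ℂ, (μ • 1 - N).det = (μ - 2*(b:ℂ))*(μ^2 - 2*(P:ℂ)*μ - (Q:ℂ)) := by
      intro μ
      rw [hN]
      rw [Matrix.det_fin_three]
      simp [Matrix.sub_apply, Matrix.smul_apply, Matrix.one_apply]
      linear_combination ((μ-2*(b:ℂ))*(-2*(a:ℂ)*(μ-2*(c:ℂ)*(u:ℂ)^2) - ((a:ℂ)+(c:ℂ))^2*(u:ℂ)^2))*htc
        + ((μ-2*(b:ℂ))*(-2*(c:ℂ)*(μ-2*(a:ℂ)*(x:ℂ)) - ((a:ℂ)+(c:ℂ))^2*(x:ℂ)))*huc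
        + ((μ-2*(b:ℂ))*(2*μ))*hPc + (μ-2*(b:ℂ))*hQc
    have hdetN : N.det = -(2*(b:ℂ)*(Q:ℂ)) := by
      have h0 := hdetgen 0
      rw [zero_smul, zero_sub, Matrix.det_neg] at h0
      simp only [Fintype.card_fin] at h0
      have h1 : -N.det = 2*(b:ℂ)*(Q:ℂ) := by
        rw [show ((-1:ℂ))^3 * N.det = -N.det by ring] at h0
        rw [h0]; ring
      exact neg_eq_iff_eq_neg.mp h1
    refine ⟨P + R, 2*b, P - R, ?_, ?_, ?_, ?_, ?_, ?_, ?_, ?_, ?_, ?_⟩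
    · intro h
      apply hq
      have hsq2 : P^2 + Q = (2*b - P)^2 := by
        rw [← hR2]; rw [show R = 2*b - P by linarith]
      linear_combination -hsq2
    · intro h
      have : R = 0 := by linarith
      linarith
    · intro h
      apply hq
      have hsq2 : P^2 + Q = (P - 2*b)^2 := by
        rw [← hR2]; rw [show R = P - 2*b by linarith]
      linear_combination -hsq2
    · have := neg_abs_le P; intro h; nlinarith
    · intro h
      apply hb; linarith
    · have := le_abs_self P; intro h; nlinarith
    · rw [hdetN]
      simp only [neg_ne_zero]
      rw [show (2*(b:ℂ)*(Q:ℂ)) = (((2*b*Q : ℝ)):ℂ) by push_cast; ring]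
      exact Complex.ofReal_ne_zero.mpr (by positivity)
    · rw [hdetgen]
      have hroot : (P+R)^2 - 2*P*(P+R) - Q = 0 := by linear_combination hR2
      have hrootc : ((P:ℂ)+(R:ℂ))^2 - 2*(P:ℂ)*((P:ℂ)+(R:ℂ)) - (Q:ℂ) = 0 := by
        exact_mod_cast hroot
      push_cast
      linear_combination ((P:ℂ)+(R:ℂ)-2*(b:ℂ))*hrootc
    · rw [hdetgen]
      push_cast
      ring
    · rw [hdetgen]
      have hroot : (P-R)^2 - 2*P*(P-R) - Q = 0 := by linear_combination hR2
      have hrootc : ((P:ℂ)-(R:ℂ))^2 - 2*(P:ℂ)*((P:ℂ)-(R:ℂ)) - (Q:ℂ) = 0 := by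
        exact_mod_cast hroot
      push_cast
      linear_combination ((P:ℂ)-(R:ℂ)-2*(b:ℂ))*hrootc


lemma aux_smul_one_sub_diag (w : Fin 3 → ℂ) (μ : ℂ) :
    μ • (1 : Matrix (Fin 3) (Fin 3) ℂ) - Matrix.diagonal w = Matrix.diagonal (fun i => μ - w i) := by
  rw [← Matrix.diagonal_one, ← Matrix.diagonal_smul, Matrix.diagonal_sub]
  congr 1
  funext i
  simp

lemma caseB_core (a : ℝ) (ha : a ≠ 0) (s : ℕ) (hs : 0 < s) :
    ∃ C : Matrix (Fin 3) (Fin 3) ℂ, C.IsHermitian ∧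
      ∃ μ₁ μ₂ μ₃ : ℝ, μ₁ ≠ μ₂ ∧ μ₁ ≠ μ₃ ∧ μ₂ ≠ μ₃ ∧ μ₁ ≠ 0 ∧ μ₂ ≠ 0 ∧ μ₃ ≠ 0 ∧
      (Matrix.diagonal (fun _ : Fin 3 => (a : ℂ)) * C ^ s
        + C ^ s * Matrix.diagonal (fun _ : Fin 3 => (a : ℂ))).det ≠ 0 ∧
      ((μ₁ : ℂ) • 1 - (Matrix.diagonal (fun _ : Fin 3 => (a : ℂ)) * C ^ s
        + C ^ s * Matrix.diagonal (fun _ : Fin 3 => (a : ℂ)))).det = 0 ∧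
      ((μ₂ : ℂ) • 1 - (Matrix.diagonal (fun _ : Fin 3 => (a : ℂ)) * C ^ s
        + C ^ s * Matrix.diagonal (fun _ : Fin 3 => (a : ℂ)))).det = 0 ∧
      ((μ₃ : ℂ) • 1 - (Matrix.diagonal (fun _ : Fin 3 => (a : ℂ)) * C ^ s
        + C ^ s * Matrix.diagonal (fun _ : Fin 3 => (a : ℂ)))).det = 0 := by
  refine ⟨Matrix.diagonal ![(1:ℂ), 2, 3], ?_, ?_⟩
  · rw [Matrix.IsHermitian]
    ext i j
    fin_cases i <;> fin_cases j <;>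
      simp [Matrix.conjTranspose_apply, Matrix.diagonal_apply]
  · have h2s : (1:ℝ) < 2 ^ s := one_lt_pow₀ (by norm_num) hs.ne'
    have h3s : (1:ℝ) < 3 ^ s := one_lt_pow₀ (by norm_num) hs.ne'
    have h23 : (2:ℝ) ^ s < 3 ^ s := pow_lt_pow_left₀ (by norm_num) (by norm_num) hs.ne'
    have haC : (a:ℂ) ≠ 0 := Complex.ofReal_ne_zero.mpr ha
    have hN : Matrix.diagonal (fun _ : Fin 3 => (a : ℂ)) * (Matrix.diagonal ![(1:ℂ), 2, 3]) ^ s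
        + (Matrix.diagonal ![(1:ℂ), 2, 3]) ^ s * Matrix.diagonal (fun _ : Fin 3 => (a : ℂ))
        = Matrix.diagonal (fun i => 2 * (a:ℂ) * ((![(1:ℂ), 2, 3]) i) ^ s) := by
      rw [Matrix.diagonal_pow, Matrix.diagonal_mul_diagonal, Matrix.diagonal_mul_diagonal,
        Matrix.diagonal_add]
      apply congrArg Matrix.diagonal
      funext i
      simp only [Pi.mul_apply, Pi.pow_apply, Pi.add_apply]
      ring
    refine ⟨2*a, 2*a*2^s, 2*a*3^s, ?_, ?_, ?_, ?_, ?_, ?_, ?_, ?_, ?_, ?_⟩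
    · intro h; rcases mul_eq_mul_left_iff.mp (by linarith : 2*a*1 = 2*a*2^s) with h' | h'
      · linarith
      · exact ha (by linarith)
    · intro h; rcases mul_eq_mul_left_iff.mp (by linarith : 2*a*1 = 2*a*3^s) with h' | h'
      · linarith
      · exact ha (by linarith)
    · intro h; rcases mul_eq_mul_left_iff.mp (h : 2*a*2^s = 2*a*3^s) with h' | h'
      · linarith
      · exact ha (by linarith)
    · intro h; exact ha (by linarith)
    · intro h
      have h2 : (2:ℝ)^s > 0 := by positivity
      rcases mul_eq_zero.mp h with h' | h'
      · exact ha (by linarith)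
      · linarith
    · intro h
      have h3 : (3:ℝ)^s > 0 := by positivity
      rcases mul_eq_zero.mp h with h' | h'
      · exact ha (by linarith)
      · linarith
    · rw [hN, Matrix.det_diagonal, Fin.prod_univ_three]
      have h2C : ((2:ℂ))^s ≠ 0 := pow_ne_zero _ two_ne_zero
      have h3C : ((3:ℂ))^s ≠ 0 := pow_ne_zero _ (by norm_num)
      simp only [Matrix.cons_val_zero, Matrix.cons_val_one, Matrix.head_cons]
      refine mul_ne_zero (mul_ne_zero ?_ ?_) ?_
      · simpa using mul_ne_zero (two_ne_zero (α := ℂ)) haC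
      · exact mul_ne_zero (mul_ne_zero two_ne_zero haC) h2C
      · have : (![(1:ℂ), 2, 3]) 2 = 3 := rfl
        rw [this]
        exact mul_ne_zero (mul_ne_zero two_ne_zero haC) h3C
    · rw [hN, aux_smul_one_sub_diag, Matrix.det_diagonal, Fin.prod_univ_three]
      have h0 : (![(1:ℂ), 2, 3]) 0 = 1 := rfl
      rw [h0]
      push_cast
      ring
    · rw [hN, aux_smul_one_sub_diag, Matrix.det_diagonal, Fin.prod_univ_three]
      have h1 : (![(1:ℂ), 2, 3]) 1 = 2 := rfl
      rw [h1]
      push_cast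
      ring
    · rw [hN, aux_smul_one_sub_diag, Matrix.det_diagonal, Fin.prod_univ_three]
      have h2 : (![(1:ℂ), 2, 3]) 2 = 3 := rfl
      rw [h2]
      push_cast
      ring


lemma aux_conj_pow {n : Type*} [Fintype n] [DecidableEq n] (V X : Matrix n n ℂ)
    (h : star V * V = 1) (h' : V * star V = 1) (s : ℕ) :
    (V * X * star V) ^ s = V * X ^ s * star V := by
  induction s with
  | zero => simp [h']
  | succ k ih =>
    rw [pow_succ, pow_succ, ih]
    calc V * X ^ k * star V * (V * X * star V)
        = V * X ^ k * (star V * V) * X * star V := by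
          simp only [Matrix.mul_assoc]
      _ = V * X ^ k * X * star V := by rw [h]; simp only [Matrix.mul_one]
      _ = V * (X ^ k * X) * star V := by simp only [Matrix.mul_assoc]


lemma aux_assemble (n : ℕ) (s : ℕ) (hs : 0 < s) (A : Matrix (Fin n) (Fin n) ℂ)
    (V : Matrix (Fin n) (Fin n) ℂ) (hV : V ∈ Matrix.unitaryGroup (Fin n) ℂ)
    (ev : Fin n → ℝ)
    (hspec : A = V * Matrix.diagonal (fun i => (ev i : ℂ)) * star V)
    (m : ℕ) (e : Fin 3 ⊕ Fin m ≃ Fin n)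
    (C3 : Matrix (Fin 3) (Fin 3) ℂ) (hherm : C3.IsHermitian)
    (μ₁ μ₂ μ₃ : ℝ) (h12 : μ₁ ≠ μ₂) (h13 : μ₁ ≠ μ₃) (h23 : μ₂ ≠ μ₃)
    (h10 : μ₁ ≠ 0) (h20 : μ₂ ≠ 0) (h30 : μ₃ ≠ 0)
    (hdet : (Matrix.diagonal (fun i => (ev (e (Sum.inl i)) : ℂ)) * C3 ^ s
        + C3 ^ s * Matrix.diagonal (fun i => (ev (e (Sum.inl i)) : ℂ))).det ≠ 0)
    (hd1 : ((μ₁ : ℂ) • 1 - (Matrix.diagonal (fun i => (ev (e (Sum.inl i)) : ℂ)) * C3 ^ s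
        + C3 ^ s * Matrix.diagonal (fun i => (ev (e (Sum.inl i)) : ℂ)))).det = 0)
    (hd2 : ((μ₂ : ℂ) • 1 - (Matrix.diagonal (fun i => (ev (e (Sum.inl i)) : ℂ)) * C3 ^ s
        + C3 ^ s * Matrix.diagonal (fun i => (ev (e (Sum.inl i)) : ℂ)))).det = 0)
    (hd3 : ((μ₃ : ℂ) • 1 - (Matrix.diagonal (fun i => (ev (e (Sum.inl i)) : ℂ)) * C3 ^ s
        + C3 ^ s * Matrix.diagonal (fun i => (ev (e (Sum.inl i)) : ℂ)))).det = 0) :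
    ∃ B : Matrix (Fin n) (Fin n) ℂ, B.IsHermitian ∧ B.rank ≤ 3 ∧
      (A * B ^ s + B ^ s * A).rank = 3 ∧
      ∃ ν₁ ν₂ ν₃ : ℝ, ν₁ ≠ ν₂ ∧ ν₁ ≠ ν₃ ∧ ν₂ ≠ ν₃ ∧
        ν₁ ≠ 0 ∧ ν₂ ≠ 0 ∧ ν₃ ≠ 0 ∧
        (ν₁ : ℂ) ∈ spectrum ℂ (A * B ^ s + B ^ s * A) ∧
        (ν₂ : ℂ) ∈ spectrum ℂ (A * B ^ s + B ^ s * A) ∧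
        (ν₃ : ℂ) ∈ spectrum ℂ (A * B ^ s + B ^ s * A) := by
  classical
  set D3 : Matrix (Fin 3) (Fin 3) ℂ :=
    Matrix.diagonal (fun i => (ev (e (Sum.inl i)) : ℂ)) with hD3
  set Dm : Matrix (Fin m) (Fin m) ℂ :=
    Matrix.diagonal (fun i => (ev (e (Sum.inr i)) : ℂ)) with hDm
  set φ := Matrix.reindexAlgEquiv ℂ ℂ e with hφ
  have hstarV : star V * V = 1 := (Matrix.mem_unitaryGroup_iff'.mp hV)
  have hVstar : V * star V = 1 := (Matrix.mem_unitaryGroup_iff.mp hV)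
  have hVunit : IsUnit V.det := by
    apply (Matrix.isUnit_iff_isUnit_det V).mp
    exact (Unitary.toUnits (⟨V, hV⟩ : Matrix.unitaryGroup (Fin n) ℂ)).isUnit
  have hVsunit : IsUnit (star V).det := by
    apply (Matrix.isUnit_iff_isUnit_det _).mp
    exact (Unitary.toUnits (star (⟨V, hV⟩ : Matrix.unitaryGroup (Fin n) ℂ))).isUnit
  -- the diagonal as a reindex of blocks
  have hDiag : Matrix.diagonal (fun i => (ev i : ℂ)) = φ (Matrix.fromBlocks D3 0 0 Dm) := by
    rw [hφ, Matrix.reindexAlgEquiv_apply, hD3, hDm, Matrix.fromBlocks_diagonal,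
      Matrix.reindex_apply, Matrix.submatrix_diagonal_equiv]
    apply congrArg Matrix.diagonal
    funext i
    rcases hi : e.symm i with t | t
    · have h' : e (Sum.inl t) = i := by rw [← hi, Equiv.apply_symm_apply]
      simp only [Function.comp_apply, hi, Sum.elim_inl, Sum.elim_inr, h']
    · have h' : e (Sum.inr t) = i := by rw [← hi, Equiv.apply_symm_apply]
      simp only [Function.comp_apply, hi, Sum.elim_inl, Sum.elim_inr, h']
  set Cn := φ (Matrix.fromBlocks C3 0 0 (0 : Matrix (Fin m) (Fin m) ℂ)) with hCn
  refine ⟨V * Cn * star V, ?_, ?_, ?_⟩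
  · -- Hermitian
    have hCnH : Cnᴴ = Cn := by
      rw [hCn, hφ, Matrix.reindexAlgEquiv_apply, Matrix.reindex_apply,
        Matrix.conjTranspose_submatrix, Matrix.fromBlocks_conjTranspose]
      congr 1
      simp [hherm.eq]
    show (V * Cn * star V)ᴴ = V * Cn * star V
    simp [Matrix.star_eq_conjTranspose, Matrix.conjTranspose_mul, Matrix.mul_assoc, hCnH]
  · -- rank ≤ 3
    have h1 : (V * Cn * star V).rank ≤ Cn.rank :=
      le_trans (Matrix.rank_mul_le_left _ _) (Matrix.rank_mul_le_right _ _)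
    have h2 : Cn.rank = C3.rank := by
      rw [hCn, hφ, Matrix.reindexAlgEquiv_apply, Matrix.reindex_apply, Matrix.rank_submatrix,
        aux_rank_fb]
    calc (V * Cn * star V).rank ≤ Cn.rank := h1
      _ = C3.rank := h2
      _ ≤ 3 := Matrix.rank_le_width C3
  · -- main part
    set N3 := D3 * C3 ^ s + C3 ^ s * D3 with hN3
    have hBpow : (V * Cn * star V) ^ s = V * φ (Matrix.fromBlocks (C3 ^ s) 0 0 0) * star V := by
      rw [aux_conj_pow V Cn hstarV hVstar, hCn, ← map_pow, aux_fb_pow m C3 s hs]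
    have hM : A * (V * Cn * star V) ^ s + (V * Cn * star V) ^ s * A
        = V * φ (Matrix.fromBlocks N3 0 0 0) * star V := by
      rw [hBpow, hspec, hDiag]
      have hmul1 : V * φ (Matrix.fromBlocks D3 0 0 Dm) * star V *
          (V * φ (Matrix.fromBlocks (C3 ^ s) 0 0 0) * star V)
          = V * (φ (Matrix.fromBlocks D3 0 0 Dm) * φ (Matrix.fromBlocks (C3 ^ s) 0 0 0)) * star V := by
        simp only [Matrix.mul_assoc]
        rw [show star V * (V * (φ (Matrix.fromBlocks (C3 ^ s) 0 0 0) * star V)) =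
          (star V * V) * (φ (Matrix.fromBlocks (C3 ^ s) 0 0 0) * star V) by simp only [Matrix.mul_assoc],
          hstarV, Matrix.one_mul]
      have hmul2 : V * φ (Matrix.fromBlocks (C3 ^ s) 0 0 0) * star V *
          (V * φ (Matrix.fromBlocks D3 0 0 Dm) * star V)
          = V * (φ (Matrix.fromBlocks (C3 ^ s) 0 0 0) * φ (Matrix.fromBlocks D3 0 0 Dm)) * star V := by
        simp only [Matrix.mul_assoc]
        rw [show star V * (V * (φ (Matrix.fromBlocks D3 0 0 Dm) * star V)) =
          (star V * V) * (φ (Matrix.fromBlocks D3 0 0 Dm) * star V) by simp only [Matrix.mul_assoc],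
          hstarV, Matrix.one_mul]
      have hblock : φ (Matrix.fromBlocks D3 0 0 Dm) * φ (Matrix.fromBlocks (C3 ^ s) 0 0 0)
          + φ (Matrix.fromBlocks (C3 ^ s) 0 0 0) * φ (Matrix.fromBlocks D3 0 0 Dm)
          = φ (Matrix.fromBlocks N3 0 0 0) := by
        rw [← _root_.map_mul, ← _root_.map_mul, ← _root_.map_add]
        congr 1
        rw [Matrix.fromBlocks_multiply, Matrix.fromBlocks_multiply, Matrix.fromBlocks_add, hN3]
        congr 1 <;> simp
      rw [hmul1, hmul2, ← Matrix.add_mul, ← Matrix.mul_add, hblock]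
    rw [hM]
    constructor
    · -- rank = 3
      rw [Matrix.rank_mul_eq_left_of_isUnit_det _ _ hVsunit,
        Matrix.rank_mul_eq_right_of_isUnit_det _ _ hVunit, hφ,
        Matrix.reindexAlgEquiv_apply, Matrix.reindex_apply, Matrix.rank_submatrix, aux_rank_fb]
      have : IsUnit N3 := (Matrix.isUnit_iff_isUnit_det N3).mpr (isUnit_iff_ne_zero.mpr hdet)
      rw [Matrix.rank_of_isUnit N3 this, Fintype.card_fin]
    · -- spectrum
      have hspecconj : spectrum ℂ (V * φ (Matrix.fromBlocks N3 0 0 0) * star V)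
          = spectrum ℂ (Matrix.fromBlocks N3 0 0 (0 : Matrix (Fin m) (Fin m) ℂ)) := by
        have h1 : spectrum ℂ (V * φ (Matrix.fromBlocks N3 0 0 0) * star V)
            = spectrum ℂ (φ (Matrix.fromBlocks N3 0 0 0)) := by
          exact Unitary.spectrum_star_right_conjugate (U := (⟨V, hV⟩ : Matrix.unitaryGroup (Fin n) ℂ))
        rw [h1, hφ]
        exact AlgEquiv.spectrum_eq (Matrix.reindexAlgEquiv ℂ ℂ e) _
      rw [hspecconj]
      exact ⟨μ₁, μ₂, μ₃, h12, h13, h23, h10, h20, h30,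
        aux_mem_spectrum_fb m N3 _ hd1, aux_mem_spectrum_fb m N3 _ hd2,
        aux_mem_spectrum_fb m N3 _ hd3⟩


theorem stmt_16 (n : ℕ) (hn : 3 ≤ n) (s : ℕ) (hs : 0 < s)
    (A : Matrix (Fin n) (Fin n) ℂ) (hA : A.IsHermitian) (hA0 : A ≠ 0)
    (hrk : 2 ≤ A.rank) :
    ∃ B : Matrix (Fin n) (Fin n) ℂ, B.IsHermitian ∧ B.rank ≤ 3 ∧
      (A * B ^ s + B ^ s * A).rank = 3 ∧
      ∃ μ₁ μ₂ μ₃ : ℝ, μ₁ ≠ μ₂ ∧ μ₁ ≠ μ₃ ∧ μ₂ ≠ μ₃ ∧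
        μ₁ ≠ 0 ∧ μ₂ ≠ 0 ∧ μ₃ ≠ 0 ∧
        (μ₁ : ℂ) ∈ spectrum ℂ (A * B ^ s + B ^ s * A) ∧
        (μ₂ : ℂ) ∈ spectrum ℂ (A * B ^ s + B ^ s * A) ∧
        (μ₃ : ℂ) ∈ spectrum ℂ (A * B ^ s + B ^ s * A) := by
  classical
  set ev : Fin n → ℝ := hA.eigenvalues with hev
  set V : Matrix (Fin n) (Fin n) ℂ := (hA.eigenvectorUnitary : Matrix (Fin n) (Fin n) ℂ) with hVdef
  have hV : V ∈ Matrix.unitaryGroup (Fin n) ℂ := (hA.eigenvectorUnitary).2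
  have hspec : A = V * Matrix.diagonal (fun i => (ev i : ℂ)) * star V := hA.spectral_theorem
  have hm : n = 3 + (n - 3) := by omega
  have e₀ : Fin 3 ⊕ Fin (n - 3) ≃ Fin n := finSumFinEquiv.trans (finCongr hm.symm)
  -- two nonzero eigenvalues
  rw [hA.rank_eq_card_non_zero_eigs] at hrk
  obtain ⟨⟨u, hu⟩, ⟨v, hv⟩, huv'⟩ :=
    Fintype.exists_pair_of_one_lt_card (lt_of_lt_of_le one_lt_two hrk)
  have huv : u ≠ v := fun h => huv' (Subtype.ext h)
  by_cases hconst : ∀ p q : Fin n, ev p = ev q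
  · -- constant case
    have hspec' : A = V * Matrix.diagonal (fun _ : Fin n => ((ev u : ℝ) : ℂ)) * star V := by
      have hdd : (Matrix.diagonal fun i => ((ev i : ℝ) : ℂ))
          = Matrix.diagonal (fun _ : Fin n => ((ev u : ℝ) : ℂ)) := by
        apply congrArg Matrix.diagonal
        funext i
        rw [hconst i u]
      rw [hspec, hdd]
    obtain ⟨C3, hherm, μ₁, μ₂, μ₃, h12, h13, h23, h10, h20, h30, hdet, hd1, hd2, hd3⟩ :=
      caseB_core (ev u) hu s hs
    exact aux_assemble n s hs A V hV (fun _ => ev u) hspec' (n - 3) e₀ C3 hherm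
      μ₁ μ₂ μ₃ h12 h13 h23 h10 h20 h30 hdet hd1 hd2 hd3
  · push_neg at hconst
    obtain ⟨p, q, hpq⟩ := hconst
    obtain ⟨i, j, k, hij, hik, hjk, hj0, hik'⟩ := aux_pick n hn ev u v huv hu hv p q hpq
    have hx01 : e₀ (Sum.inl 0) ≠ e₀ (Sum.inl 1) := by
      intro h; have := e₀.injective h; simp at this
    have hx02 : e₀ (Sum.inl 0) ≠ e₀ (Sum.inl 2) := by
      intro h; have := e₀.injective h; simp at this
    have hx12 : e₀ (Sum.inl 1) ≠ e₀ (Sum.inl 2) := by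
      intro h; have := e₀.injective h; simp at this
    obtain ⟨π, hπ0, hπ1, hπ2⟩ := aux_perm3 (e₀ (Sum.inl 0)) (e₀ (Sum.inl 1)) (e₀ (Sum.inl 2))
      i j k hx01 hx02 hx12 hij hik hjk
    set e : Fin 3 ⊕ Fin (n - 3) ≃ Fin n := e₀.trans π with hedef
    have he0 : e (Sum.inl 0) = i := by rw [hedef]; exact hπ0
    have he1 : e (Sum.inl 1) = j := by rw [hedef]; exact hπ1
    have he2 : e (Sum.inl 2) = k := by rw [hedef]; exact hπ2
    set d : Fin 3 → ℝ := fun t => ev (e (Sum.inl t)) with hd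
    have hd1' : d 1 ≠ 0 := by rw [hd]; simpa [he1] using hj0
    have hd02 : d 0 ≠ d 2 := by rw [hd]; simpa [he0, he2] using hik'
    obtain ⟨C3, hherm, hCC, μ₁, μ₂, μ₃, h12, h13, h23, h10, h20, h30, hdet, hh1, hh2, hh3⟩ :=
      caseA_core d hd1' hd02
    have hCs : C3 ^ s = C3 := aux_idem_pow C3 hCC s hs
    apply aux_assemble n s hs A V hV ev hspec (n - 3) e C3 hherm μ₁ μ₂ μ₃
      h12 h13 h23 h10 h20 h30
    · rw [hCs]; exact hdet
    · rw [hCs]; exact hh1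
    · rw [hCs]; exact hh2
    · rw [hCs]; exact hh3
end

section
/- Let A be an n×n complex matrix (n ≥ 3) such that the set {x, Ax, A²x} is linearly dependent for every x ∈ ℂ^n. Then A satisfies a quadratic polynomial: there exist scalars a, b, c, not all zero, with aA² + bA + cI = 0. -/
open Polynomial Matrix

theorem stmt_19 (n : ℕ) (hn : 3 ≤ n) (A : Matrix (Fin n) (Fin n) ℂ)
    (h : ∀ x : Fin n → ℂ, ¬ LinearIndependent ℂ ![x, A.mulVec x, (A ^ 2).mulVec x]) :
    ∃ a b c : ℂ, ¬ (a = 0 ∧ b = 0 ∧ c = 0) ∧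
      a • A ^ 2 + b • A + c • (1 : Matrix (Fin n) (Fin n) ℂ) = 0 := by
  classical
  set χ := A.charpoly with hχdef
  have hχmonic : χ.Monic := A.charpoly_monic
  have hχdeg : χ.natDegree = n := by
    rw [hχdef, A.charpoly_natDegree_eq_dim, Fintype.card_fin]
  have hχ0 : χ ≠ 0 := hχmonic.ne_zero
  set E : Finset ℂ := χ.roots.toFinset with hE
  have hEmem : ∀ z : ℂ, χ.IsRoot z → z ∈ E := by
    intro z hz
    exact Multiset.mem_toFinset.mpr (Polynomial.mem_roots'.mpr ⟨hχ0, hz⟩)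
  have hEne : E.Nonempty := by
    obtain ⟨z, hz⟩ := Complex.exists_root (f := χ)
      (by rw [Polynomial.degree_eq_natDegree hχ0, hχdeg]; exact_mod_cast (by omega : 0 < n))
    exact ⟨z, hEmem z hz⟩
  obtain ⟨l₀, hl₀⟩ := hEne
  set B : ℂ → ℂ → Matrix (Fin n) (Fin n) ℂ := fun l m => (A - l • 1) * (A - m • 1) with hB
  -- key pointwise claim
  have key : ∀ x : Fin n → ℂ, ∃ l ∈ E, ∃ m ∈ E, (B l m).mulVec x = 0 := by
    intro x
    obtain ⟨g, hg, i, hgi⟩ := Fintype.not_linearIndependent_iff.mp (h x)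
    simp only [Fin.sum_univ_three, Matrix.cons_val_zero, Matrix.cons_val_one,
      Matrix.head_cons, Matrix.cons_val_two, Matrix.tail_cons] at hg
    set p : ℂ[X] := C (g 2) * X ^ 2 + C (g 1) * X + C (g 0) with hp
    have hpA : (Polynomial.aeval A p).mulVec x = 0 := by
      have hev : Polynomial.aeval A p = g 2 • A ^ 2 + g 1 • A + g 0 • 1 := by
        simp [hp, Algebra.algebraMap_eq_smul_one, smul_mul_assoc]
      rw [hev, Matrix.add_mulVec, Matrix.add_mulVec, Matrix.smul_mulVec,
        Matrix.smul_mulVec, Matrix.smul_mulVec, Matrix.one_mulVec]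
      linear_combination (norm := module) hg
    have hpne : p ≠ 0 := by
      intro h0
      have c0 : g 0 = 0 := by
        have := congrArg (fun q => Polynomial.coeff q 0) h0
        simpa [hp, coeff_add, coeff_C_mul, coeff_X_pow] using this
      have c1 : g 1 = 0 := by
        have := congrArg (fun q => Polynomial.coeff q 1) h0
        simpa [hp, coeff_add, coeff_C_mul, coeff_X_pow] using this
      have c2 : g 2 = 0 := by
        have := congrArg (fun q => Polynomial.coeff q 2) h0
        simpa [hp, coeff_add, coeff_C_mul, coeff_X_pow] using this
      fin_cases i
      · exact hgi c0
      · exact hgi c1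
      · exact hgi c2
    -- gcd with the characteristic polynomial
    set d := EuclideanDomain.gcd p χ with hd
    have hdp : d ∣ p := EuclideanDomain.gcd_dvd_left p χ
    have hdχ : d ∣ χ := EuclideanDomain.gcd_dvd_right p χ
    have hd0 : d ≠ 0 := by
      intro h0
      exact hpne ((EuclideanDomain.gcd_eq_zero_iff).mp (hd ▸ h0)).1
    have hddeg : d.natDegree ≤ 2 :=
      le_trans (Polynomial.natDegree_le_of_dvd hdp hpne) (natDegree_quadratic_le)
    have hdx : (Polynomial.aeval A d).mulVec x = 0 := by
      have hbez := EuclideanDomain.gcd_eq_gcd_ab p χ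
      rw [hd, hbez, map_add, mul_comm p, mul_comm χ, _root_.map_mul, _root_.map_mul,
        Matrix.add_mulVec, ← Matrix.mulVec_mulVec, ← Matrix.mulVec_mulVec,
        hpA, Matrix.aeval_self_charpoly]
      simp
    -- roots of divisors of χ lie in E
    have rootE : ∀ q : ℂ[X], q ∣ χ → ∀ z : ℂ, q.IsRoot z → z ∈ E := by
      intro q hq z hz
      exact hEmem z (hz.dvd hq)
    -- case analysis on degree of d
    interval_cases hdeg : d.natDegree
    · -- degree 0 : x = 0
      obtain ⟨k, hk⟩ : ∃ k : ℂ, d = C k := ⟨d.coeff 0, Polynomial.eq_C_of_natDegree_eq_zero hdeg⟩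
      have hkne : k ≠ 0 := fun h0 => hd0 (by rw [hk, h0, map_zero])
      have hx0 : x = 0 := by
        rw [hk] at hdx
        simp only [Polynomial.aeval_C, Algebra.algebraMap_eq_smul_one,
          Matrix.smul_mulVec, Matrix.one_mulVec] at hdx
        simpa [hkne] using congrArg (fun v => k⁻¹ • v) hdx
      exact ⟨l₀, hl₀, l₀, hl₀, by rw [hx0, Matrix.mulVec_zero]⟩
    · -- degree 1
      have hdd : 0 < d.degree := by
        rw [Polynomial.degree_eq_natDegree hd0, hdeg]; exact_mod_cast Nat.zero_lt_one
      obtain ⟨l, hl⟩ := Complex.exists_root hdd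
      have hlE : l ∈ E := rootE d hdχ l hl
      obtain ⟨e, he⟩ := (Polynomial.dvd_iff_isRoot).mpr hl
      have hene : e ≠ 0 := fun h0 => hd0 (by rw [he, h0, mul_zero])
      have hedeg : e.natDegree = 0 := by
        have := Polynomial.natDegree_mul (p := X - C l) (q := e) (X_sub_C_ne_zero l) hene
        rw [← he, hdeg, Polynomial.natDegree_X_sub_C] at this
        omega
      obtain ⟨k, hk⟩ : ∃ k : ℂ, e = C k := ⟨e.coeff 0, Polynomial.eq_C_of_natDegree_eq_zero hedeg⟩
      have hkne : k ≠ 0 := fun h0 => hene (by rw [hk, h0, map_zero])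
      have hAl : (A - l • 1).mulVec x = 0 := by
        rw [he, hk, _root_.map_mul, Polynomial.aeval_C, map_sub, Polynomial.aeval_X,
          Polynomial.aeval_C, Algebra.algebraMap_eq_smul_one,
          Algebra.algebraMap_eq_smul_one] at hdx
        rw [Matrix.mul_smul, Matrix.mul_one] at hdx
        rw [Matrix.smul_mulVec] at hdx
        simpa [hkne] using congrArg (fun v => k⁻¹ • v) hdx
      refine ⟨l₀, hl₀, l, hlE, ?_⟩
      rw [hB, ← Matrix.mulVec_mulVec, hAl, Matrix.mulVec_zero]
    · -- degree 2
      have hdd : 0 < d.degree := by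
        rw [Polynomial.degree_eq_natDegree hd0, hdeg]; exact_mod_cast Nat.zero_lt_two
      obtain ⟨l, hl⟩ := Complex.exists_root hdd
      have hlE : l ∈ E := rootE d hdχ l hl
      obtain ⟨e, he⟩ := (Polynomial.dvd_iff_isRoot).mpr hl
      have hene : e ≠ 0 := fun h0 => hd0 (by rw [he, h0, mul_zero])
      have hedeg : e.natDegree = 1 := by
        have := Polynomial.natDegree_mul (p := X - C l) (q := e) (X_sub_C_ne_zero l) hene
        rw [← he, hdeg, Polynomial.natDegree_X_sub_C] at this
        omega
      have hed : 0 < e.degree := by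
        rw [Polynomial.degree_eq_natDegree hene, hedeg]; exact_mod_cast Nat.zero_lt_one
      obtain ⟨m, hm⟩ := Complex.exists_root hed
      have hmE : m ∈ E := rootE e (dvd_trans (Dvd.intro_left _ he.symm) hdχ) m hm
      obtain ⟨f, hf⟩ := (Polynomial.dvd_iff_isRoot).mpr hm
      have hfne : f ≠ 0 := fun h0 => hene (by rw [hf, h0, mul_zero])
      have hfdeg : f.natDegree = 0 := by
        have := Polynomial.natDegree_mul (p := X - C m) (q := f) (X_sub_C_ne_zero m) hfne
        rw [← hf, hedeg, Polynomial.natDegree_X_sub_C] at this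
        omega
      obtain ⟨k, hk⟩ : ∃ k : ℂ, f = C k := ⟨f.coeff 0, Polynomial.eq_C_of_natDegree_eq_zero hfdeg⟩
      have hkne : k ≠ 0 := fun h0 => hfne (by rw [hk, h0, map_zero])
      refine ⟨l, hlE, m, hmE, ?_⟩
      have hAeval : Polynomial.aeval A d = (B l m) * (k • 1) := by
        rw [he, hf, hk, _root_.map_mul, _root_.map_mul, Polynomial.aeval_C, map_sub, map_sub,
          Polynomial.aeval_X, Polynomial.aeval_C, Polynomial.aeval_C,
          Algebra.algebraMap_eq_smul_one, Algebra.algebraMap_eq_smul_one,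
          Algebra.algebraMap_eq_smul_one, hB, mul_assoc]
      rw [hAeval, ← Matrix.mulVec_mulVec] at hdx
      rw [Matrix.smul_mulVec, Matrix.one_mulVec, Matrix.mulVec_smul] at hdx
      simpa [hkne] using congrArg (fun v => k⁻¹ • v) hdx
  -- covering by finitely many kernels
  set K : ℂ × ℂ → Subspace ℂ (Fin n → ℂ) :=
    fun lm => LinearMap.ker (B lm.1 lm.2).mulVecLin with hK
  set s : Finset (Subspace ℂ (Fin n → ℂ)) := (E ×ˢ E).image K with hs
  have hcover : ⋃ p ∈ s, (p : Set (Fin n → ℂ)) = Set.univ := by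
    ext x
    simp only [Set.mem_iUnion, Set.mem_univ, iff_true]
    obtain ⟨l, hl, m, hm, hx⟩ := key x
    refine ⟨K (l, m), ⟨Finset.mem_image_of_mem K (Finset.mk_mem_product hl hm), ?_⟩⟩
    simpa [hK, LinearMap.mem_ker, Matrix.mulVecLin_apply] using hx
  have htop : ⊤ ∈ s := Subspace.top_mem_of_biUnion_eq_univ hcover
  rw [hs, Finset.mem_image] at htop
  obtain ⟨lm, _, hker⟩ := htop
  obtain ⟨l, m⟩ := lm
  have hB0 : B l m = 0 := by
    ext i j
    have hml : (B l m).mulVecLin = 0 := LinearMap.ker_eq_top.mp hker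
    have h2 : (B l m).mulVec (Pi.single j 1) = 0 := by
      rw [← Matrix.mulVecLin_apply, hml]; rfl
    have := congrFun h2 i
    simpa [Matrix.mulVec_single] using this
  refine ⟨1, -(l + m), l * m, by simp, ?_⟩
  have hexp : (1 : ℂ) • A ^ 2 + (-(l + m)) • A + (l * m) • (1 : Matrix (Fin n) (Fin n) ℂ)
      = B l m := by
    rw [hB]
    simp only [Matrix.mul_sub, Matrix.sub_mul, Matrix.smul_mul, Matrix.mul_smul,
      Matrix.mul_one, Matrix.one_mul, smul_smul, ← pow_two]
    module
  rw [hexp, hB0]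
end
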